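/- arXiv:2304.12779 — 5 statements merged into one kernel-verified Lean document; each statement's English description precedes it below -/
import Mathlib

section
/- Let G be a finite simple graph and M a maximum matching of G. Then for every collection 𝒫 of vertex-disjoint paths in G, each of order at least 4, one has 2|M| ≥ (4/5)·Σ_{P∈𝒫}|V(P)|; in particular 2|M| ≥ (4/5)·opt(G). -/
open SimpleGraph

/-- Degree of a vertex in a subgraph, via `Set.ncard` of the neighbor set. -/
noncomputable def subDeg {V : Type*} {G : SimpleGraph V} (H : G.Subgraph) (v : V) : ℕ :=
  (H.neighborSet v).ncard

/-- A subgraph is a path: it is a single vertex, or it is connected with exactly two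
vertices of degree 1 and all other vertices of degree 2. -/
def IsPathSubgraph {V : Type*} {G : SimpleGraph V} (P : G.Subgraph) : Prop :=
  P.Connected ∧
  ((∃ v, P.verts = {v}) ∨
    (({v ∈ P.verts | subDeg P v = 1}).ncard = 2 ∧
      ∀ v ∈ P.verts, subDeg P v = 1 ∨ subDeg P v = 2))

/-- `x` is an endpoint of the path subgraph `P` (for paths of order at least 2). -/
def IsPathEndpoint {V : Type*} {G : SimpleGraph V} (P : G.Subgraph) (x : V) : Prop :=
  x ∈ P.verts ∧ subDeg P x = 1

/-- A matching of `G`: a finite set of edges of `G`, no two of which share an endpoint. -/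
def IsMatchingSet {V : Type*} (G : SimpleGraph V) (M : Finset (Sym2 V)) : Prop :=
  ↑M ⊆ G.edgeSet ∧ ∀ e ∈ M, ∀ f ∈ M, e ≠ f → ∀ v : V, v ∈ e → v ∉ f

/-- A maximum matching of `G`. -/
def IsMaxMatchingSet {V : Type*} (G : SimpleGraph V) (M : Finset (Sym2 V)) : Prop :=
  IsMatchingSet G M ∧ ∀ M' : Finset (Sym2 V), IsMatchingSet G M' → M'.card ≤ M.card

/-- There is a collection of vertex-disjoint path subgraphs of `G`, each of order at
least 4, whose total number of vertices `n` satisfies `p n`. -/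
def HasDisjointPathsCovering {V : Type*} (G : SimpleGraph V) (p : ℕ → Prop) : Prop :=
  ∃ Ps : Set G.Subgraph,
    (∀ P ∈ Ps, IsPathSubgraph P ∧ 4 ≤ P.verts.ncard) ∧
    (Ps.Pairwise fun P Q => Disjoint P.verts Q.verts) ∧
    p ((⋃ P ∈ Ps, P.verts).ncard)

/-- There is a collection of vertex-disjoint path subgraphs of `G`, each of order at
least 4, covering at least `N` vertices in total. -/
def HasDisjointPathCover {V : Type*} (G : SimpleGraph V) (N : ℕ) : Prop :=
  HasDisjointPathsCovering G fun n => N ≤ n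

/-- `opt G`: the maximum total number of vertices in a collection of vertex-disjoint
paths of `G`, each of order at least 4. -/
noncomputable def optValue {V : Type*} (G : SimpleGraph V) : ℕ :=
  sSup {n : ℕ |
    ∃ Ps : Set G.Subgraph,
      (∀ P ∈ Ps, IsPathSubgraph P ∧ 4 ≤ P.verts.ncard) ∧
      (Ps.Pairwise fun P Q => Disjoint P.verts Q.verts) ∧
      n = (⋃ P ∈ Ps, P.verts).ncard}

/-- Degree of a vertex in the spanning subgraph determined by an edge set `F`. -/
noncomputable def edgeDeg {W : Type*} (F : Set (Sym2 W)) (v : W) : ℕ :=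
  {e ∈ F | v ∈ e}.ncard

/-- An edge set `C` saturates a vertex set `B` if some edge of `C` has an endpoint in `B`. -/
def Saturates {W : Type*} (C : Set (Sym2 W)) (B : Set W) : Prop :=
  ∃ e ∈ C, ∃ v ∈ B, v ∈ e

lemma first_nbr {W : Type*} {G : SimpleGraph W} {u v : W} (p : G.Walk u v) (hne : u ≠ v) :
    ∃ c ∈ p.support, G.Adj u c := by
  cases p with
  | nil => exact absurd rfl hne
  | cons h q =>
    exact ⟨_, by simp [Walk.support_cons, q.start_mem_support], h⟩

lemma internal_two_nbrs {W : Type*} {G : SimpleGraph W} {u v : W} (p : G.Walk u v) :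
    p.IsPath → ∀ w : W, w ∈ p.support → w ≠ u → w ≠ v →
      ∃ a ∈ p.support, ∃ b ∈ p.support, a ≠ b ∧ G.Adj w a ∧ G.Adj w b := by
  induction p with
  | nil => intro _ w hw hu _; simp at hw; exact absurd hw hu
  | @cons u u' v h q ih =>
    intro hp w hw hu hv
    rw [Walk.support_cons, List.mem_cons] at hw
    rcases hw with rfl | hw
    · exact absurd rfl hu
    have hq : q.IsPath := hp.of_cons
    have hnotin : u ∉ q.support := ((Walk.cons_isPath_iff h q).mp hp).2
    by_cases hwu' : w = u'
    · subst hwu'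
      obtain ⟨c, hc, hadj⟩ := first_nbr q hv
      refine ⟨u, by simp [Walk.support_cons], c, by simp [Walk.support_cons, hc], ?_, h.symm, hadj⟩
      rintro rfl; exact hnotin hc
    · obtain ⟨a, ha, b, hb, hab, h1, h2⟩ := ih hq w hw hwu' hv
      exact ⟨a, by simp [Walk.support_cons, ha], b, by simp [Walk.support_cons, hb], hab, h1, h2⟩

lemma avoid_deg_one {V : Type*} [Fintype V] {G : SimpleGraph V} {P : G.Subgraph} {x : V}
    (hx : subDeg P x = 1) {u v : ↥P.verts} (p : P.coe.Walk u v) (hp : p.IsPath)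
    (hu : (u : V) ≠ x) (hv : (v : V) ≠ x) : ∀ c ∈ p.support, (c : V) ≠ x := by
  intro c hc hcx
  have hcu : c ≠ u := fun h => hu (by rw [← h, hcx])
  have hcv : c ≠ v := fun h => hv (by rw [← h, hcx])
  obtain ⟨a, _, b, _, hab, h1, h2⟩ := internal_two_nbrs p hp c hc hcu hcv
  have ha : (a : V) ∈ P.neighborSet x := by
    rw [Subgraph.mem_neighborSet]; rw [Subgraph.coe_adj] at h1; rw [← hcx]; exact h1
  have hb : (b : V) ∈ P.neighborSet x := by
    rw [Subgraph.mem_neighborSet]; rw [Subgraph.coe_adj] at h2; rw [← hcx]; exact h2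
  have : 1 < (P.neighborSet x).ncard :=
    (Set.one_lt_ncard (Set.toFinite _)).mpr ⟨a, ha, b, hb, fun h => hab (Subtype.ext h)⟩
  rw [show (P.neighborSet x).ncard = subDeg P x from rfl, hx] at this
  omega

lemma nbr_delete {V : Type*} {G : SimpleGraph V} {P : G.Subgraph} {s : Set V} {v : V}
    (hv : v ∈ P.verts) (hvs : v ∉ s) :
    (P.deleteVerts s).neighborSet v = P.neighborSet v \ s := by
  ext w
  simp only [Subgraph.mem_neighborSet, Subgraph.deleteVerts_adj, Set.mem_diff]
  constructor
  · rintro ⟨_, _, _, hw, hadj⟩; exact ⟨hadj, hw⟩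
  · rintro ⟨hadj, hw⟩; exact ⟨hv, hvs, P.edge_vert hadj.symm, hw, hadj⟩

lemma walk_transfer {V : Type*} {G : SimpleGraph V} {P : G.Subgraph} {s : Set V} :
    ∀ {x y : ↥P.verts} (p : P.coe.Walk x y), (∀ c ∈ p.support, (c : V) ∉ s) →
    ∀ (a b : ↥(P.deleteVerts s).verts), (a : V) = (x : V) → (b : V) = (y : V) →
      (P.deleteVerts s).coe.Reachable a b := by
  intro x y p
  induction p with
  | nil =>
    intro _ a b ha hb
    have : a = b := Subtype.ext (by rw [ha, hb])
    rw [this]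
  | @cons x x' y h q ih =>
    intro hs a b ha hb
    have hx' : (x' : V) ∈ (P.deleteVerts s).verts := by
      rw [Subgraph.deleteVerts_verts]
      exact ⟨x'.2, hs x' (by simp [Walk.support_cons, q.start_mem_support])⟩
    have hadj : (P.deleteVerts s).coe.Adj a ⟨x', hx'⟩ := by
      rw [Subgraph.coe_adj]
      simp only [Subgraph.deleteVerts_adj]
      rw [ha]
      refine ⟨x.2, hs x (by simp [Walk.support_cons]), x'.2, ((Set.mem_diff _).mp hx').2, ?_⟩
      exact (Subgraph.coe_adj P x x').mp h
    exact hadj.reachable.trans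
      (ih (fun c hc => hs c (by simp [Walk.support_cons, hc])) ⟨x', hx'⟩ b rfl hb)

lemma pair_mem {α : Type*} {s : Set α} (h : s.ncard = 2) {x : α} (hx : x ∈ s) :
    ∃ w, w ≠ x ∧ s = {x, w} := by
  obtain ⟨a, b, hab, rfl⟩ := Set.ncard_eq_two.mp h
  rcases hx with rfl | hx
  · exact ⟨b, fun h => hab h.symm, rfl⟩
  · rw [Set.mem_singleton_iff] at hx; subst hx
    exact ⟨a, hab, Set.pair_comm a x⟩

lemma support_internal_nbrs {V : Type*} {G : SimpleGraph V} {P : G.Subgraph}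
    {u v : ↥P.verts} (p : P.coe.Walk u v) (hp : p.IsPath) {c : ↥P.verts}
    (hc : c ∈ p.support) (h1 : (c : V) ≠ (u : V)) (h2 : (c : V) ≠ (v : V)) :
    ∃ a ∈ p.support, ∃ b ∈ p.support, (a : V) ≠ (b : V) ∧
      (a : V) ∈ P.neighborSet c ∧ (b : V) ∈ P.neighborSet c := by
  obtain ⟨a, ha, b, hb, hab, hA, hB⟩ := internal_two_nbrs p hp c hc
    (fun h => h1 (by rw [h])) (fun h => h2 (by rw [h]))
  exact ⟨a, ha, b, hb, fun h => hab (Subtype.ext h),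
    (P.mem_neighborSet _ _).mpr ((Subgraph.coe_adj P c a).mp hA),
    (P.mem_neighborSet _ _).mpr ((Subgraph.coe_adj P c b).mp hB)⟩

-- a vertex whose neighbor set is a singleton cannot be internal on a path

lemma no_internal_singleton {V : Type*} {G : SimpleGraph V} {P : G.Subgraph}
    {u v : ↥P.verts} (p : P.coe.Walk u v) (hp : p.IsPath) {c : ↥P.verts}
    (hc : c ∈ p.support) (h1 : (c : V) ≠ (u : V)) (h2 : (c : V) ≠ (v : V))
    {t : V} (hN : P.neighborSet (c : V) = {t}) : False := by
  obtain ⟨a, _, b, _, hab, hA, hB⟩ := support_internal_nbrs p hp hc h1 h2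
  rw [hN, Set.mem_singleton_iff] at hA hB
  exact hab (hA.trans hB.symm)

lemma path_matching {V : Type*} [Fintype V] [DecidableEq V] {G : SimpleGraph V} :
    ∀ n (P : G.Subgraph), P.verts.ncard ≤ n → IsPathSubgraph P →
    ∃ m : Finset (Sym2 V), ↑m ⊆ P.edgeSet ∧
      (∀ e ∈ m, ∀ f ∈ m, e ≠ f → ∀ v : V, v ∈ e → v ∉ f) ∧
      (∀ e ∈ m, ∀ v ∈ e, v ∈ P.verts) ∧ m.card = P.verts.ncard / 2 := by
  intro n
  induction n with
  | zero =>
    intro P hle _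
    exact ⟨∅, by simp, by simp, by simp, by simp only [Finset.card_empty]; omega⟩
  | succ n ih =>
    intro P hle hP
    by_cases hN1 : P.verts.ncard ≤ 1
    · exact ⟨∅, by simp, by simp, by simp, by simp only [Finset.card_empty]; omega⟩
    push_neg at hN1
    obtain ⟨hconn, hcases⟩ := hP
    rcases hcases with ⟨v, hv⟩ | ⟨hE, hdeg⟩
    · rw [hv, Set.ncard_singleton] at hN1; omega
    set N := P.verts.ncard with hNdef
    -- get an endpoint x
    have hEne : ({v ∈ P.verts | subDeg P v = 1}).Nonempty :=
      Set.nonempty_of_ncard_ne_zero (by omega)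
    obtain ⟨x, hxE⟩ := hEne
    obtain ⟨hxv, hx1⟩ := hxE
    obtain ⟨y, hNx⟩ := Set.ncard_eq_one.mp hx1
    have hadj : P.Adj x y := (P.mem_neighborSet x y).mp (by rw [hNx]; rfl)
    have hyv : y ∈ P.verts := P.edge_vert hadj.symm
    have hxy : x ≠ y := hadj.adj_sub.ne
    have hsub2 : {x, y} ⊆ P.verts := by
      intro t ht; rcases ht with rfl | ht
      · exact hxv
      · rw [Set.mem_singleton_iff] at ht; subst ht; exact hyv
    by_cases hN3 : N ≤ 3
    · refine ⟨{s(x, y)}, ?_, ?_, ?_, ?_⟩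
      · intro e he; simp at he; subst he; exact (Subgraph.mem_edgeSet).mpr hadj
      · intro e he f hf hef; simp at he hf; rw [he, hf] at hef; exact absurd rfl hef
      · intro e he v hv; simp at he; subst he
        rcases Sym2.mem_iff.mp hv with rfl | rfl
        · exact hxv
        · exact hyv
      · have hN2 : 2 ≤ N := hN1
        simp; omega
    push_neg at hN3
    have hN4 : 4 ≤ N := hN3
    have hconn' : P.coe.Connected := Subgraph.connected_iff'.mp hconn
    -- helper to pick a vertex outside a small set
    have hpick : ∀ s : Set V, s.ncard + 1 ≤ N → (P.verts \ s).Nonempty := by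
      intro s hs
      apply Set.nonempty_of_ncard_ne_zero
      have h1 : (P.verts ∩ s).ncard ≤ s.ncard :=
        Set.ncard_le_ncard Set.inter_subset_right (Set.toFinite _)
      have h2 : (P.verts \ s).ncard = N - (P.verts ∩ s).ncard := by
        rw [← Set.ncard_diff (Set.inter_subset_left) (Set.toFinite _)]
        congr 1
        ext t; simp only [Set.mem_diff, Set.mem_inter_iff]; tauto
      omega
    -- y has degree 2
    have hdy : subDeg P y = 2 := by
      rcases hdeg y hyv with h1 | h2
      swap; · exact h2
      exfalso
      have hNy : P.neighborSet y = {x} := by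
        obtain ⟨c, hc⟩ := Set.ncard_eq_one.mp h1
        have hx' : x ∈ P.neighborSet y := (P.mem_neighborSet y x).mpr hadj.symm
        rw [hc] at hx' ⊢
        rw [Set.mem_singleton_iff] at hx'; rw [← hx']
      obtain ⟨u, huP, hus⟩ := hpick {x, y} (by
        have := Set.ncard_insert_le x ({y} : Set V)
        rw [Set.ncard_singleton] at this; omega)
      simp only [Set.mem_insert_iff, Set.mem_singleton_iff, not_or] at hus
      obtain ⟨hux, huy⟩ := hus
      obtain ⟨wk⟩ := hconn'.preconnected ⟨u, huP⟩ ⟨x, hxv⟩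
      have hp := wk.bypass_isPath
      obtain ⟨c, hc, hadjc⟩ := first_nbr wk.bypass.reverse
        (fun h => hux (congrArg Subtype.val h).symm)
      have hcy : (c : V) = y := by
        have : (c : V) ∈ P.neighborSet x := (P.mem_neighborSet _ _).mpr ((Subgraph.coe_adj _ _ _).mp hadjc)
        rw [hNx, Set.mem_singleton_iff] at this; exact this
      have hcsup : c ∈ wk.bypass.support := by
        rw [Walk.support_reverse] at hc; exact List.mem_reverse.mp hc
      exact no_internal_singleton wk.bypass hp hcsup (by rw [hcy]; exact fun h => huy h.symm)
        (by rw [hcy]; exact hxy.symm) (by rw [hcy]; exact hNy)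
    -- get z, the other neighbor of y
    have hxNy : x ∈ P.neighborSet y := (P.mem_neighborSet y x).mpr hadj.symm
    obtain ⟨z, hzx, hNy⟩ := pair_mem hdy hxNy
    have hzNy : z ∈ P.neighborSet y := by rw [hNy]; right; rfl
    have hadjyz : P.Adj y z := (P.mem_neighborSet y z).mp hzNy
    have hzv : z ∈ P.verts := P.edge_vert hadjyz.symm
    have hzy : z ≠ y := fun h => hadjyz.adj_sub.ne (by rw [h])
    have hxNz : x ∉ P.neighborSet z := by
      intro h
      have : z ∈ P.neighborSet x := (P.mem_neighborSet x z).mpr ((P.mem_neighborSet z x).mp h).symm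
      rw [hNx, Set.mem_singleton_iff] at this
      exact hzy this
    have hyNz : y ∈ P.neighborSet z := (P.mem_neighborSet z y).mpr hadjyz.symm
    have hsub3 : ({x, y, z} : Set V) ⊆ P.verts := by
      intro t ht
      rcases ht with rfl | ht; · exact hxv
      rcases ht with rfl | ht; · exact hyv
      rw [Set.mem_singleton_iff] at ht; subst ht; exact hzv
    -- the endpoint set is {x, w}
    obtain ⟨w, hwx, hEeq⟩ := pair_mem hE ⟨hxv, hx1⟩
    have hwE : w ∈ {v ∈ P.verts | subDeg P v = 1} := by rw [hEeq]; right; rfl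
    obtain ⟨hwv, hw1⟩ := hwE
    have hwy : w ≠ y := fun h => by rw [h, hdy] at hw1; omega
    -- z has degree 2
    have hdz : subDeg P z = 2 := by
      rcases hdeg z hzv with h1 | h2
      swap; · exact h2
      exfalso
      have hNz : P.neighborSet z = {y} := by
        obtain ⟨c, hc⟩ := Set.ncard_eq_one.mp h1
        rw [hc] at hyNz ⊢
        rw [Set.mem_singleton_iff] at hyNz; rw [← hyNz]
      obtain ⟨u, huP, hus⟩ := hpick {x, y, z} (by
        have h1 := Set.ncard_insert_le x ({y, z} : Set V)
        have h2 := Set.ncard_insert_le y ({z} : Set V)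
        rw [Set.ncard_singleton] at h2; omega)
      simp only [Set.mem_insert_iff, Set.mem_singleton_iff, not_or] at hus
      obtain ⟨hux, huy, huz⟩ := hus
      obtain ⟨wk⟩ := hconn'.preconnected ⟨u, huP⟩ ⟨x, hxv⟩
      have hp := wk.bypass_isPath
      obtain ⟨c, hc, hadjc⟩ := first_nbr wk.bypass.reverse
        (fun h => hux (congrArg Subtype.val h).symm)
      have hcy : (c : V) = y := by
        have : (c : V) ∈ P.neighborSet x := (P.mem_neighborSet _ _).mpr ((Subgraph.coe_adj _ _ _).mp hadjc)
        rw [hNx, Set.mem_singleton_iff] at this; exact this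
      have hcsup : c ∈ wk.bypass.support := by
        rw [Walk.support_reverse] at hc; exact List.mem_reverse.mp hc
      -- y is internal, so both its neighbors x and z are on the path
      obtain ⟨a, ha, b, hb, hab, hA, hB⟩ := support_internal_nbrs wk.bypass hp hcsup
        (by rw [hcy]; exact fun h => huy h.symm) (by rw [hcy]; exact hxy.symm)
      rw [hcy, hNy] at hA hB
      have hzsup : ∃ d ∈ wk.bypass.support, (d : V) = z := by
        rcases hA with hA | hA
        · rcases hB with hB | hB
          · exact absurd (hA.trans hB.symm) hab
          · exact ⟨b, hb, hB⟩
        · exact ⟨a, ha, hA⟩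
      obtain ⟨d, hd, hdz'⟩ := hzsup
      exact no_internal_singleton wk.bypass hp hd (by rw [hdz']; exact fun h => huz h.symm)
        (by rw [hdz']; exact fun h => hzx h) (by rw [hdz']; exact hNz)
    have hwz : w ≠ z := fun h => by rw [h, hdz] at hw1; omega
    -- the reduced subgraph P'
    set P' := P.deleteVerts {x, y} with hP'def
    have hverts' : P'.verts = P.verts \ {x, y} := Subgraph.deleteVerts_verts
    have hz' : z ∈ P'.verts := by
      rw [hverts']; exact ⟨hzv, by simp [hzx, hzy]⟩
    have hw' : w ∈ P'.verts := by rw [hverts']; exact ⟨hwv, by simp [hwx, hwy]⟩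
    have hncard' : P'.verts.ncard = N - 2 := by
      rw [hverts', Set.ncard_diff hsub2 (Set.toFinite _), Set.ncard_pair hxy]
    have hnbr' : ∀ v ∈ P.verts, v ∉ ({x, y} : Set V) →
        P'.neighborSet v = P.neighborSet v \ {x, y} := fun v hv hvs => nbr_delete hv hvs
    have hdeg_pres : ∀ v ∈ P'.verts, v ≠ z → P'.neighborSet v = P.neighborSet v := by
      intro v hv hvz
      rw [hverts'] at hv
      rw [hnbr' v hv.1 hv.2]
      ext t
      simp only [Set.mem_diff, Set.mem_insert_iff, Set.mem_singleton_iff]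
      constructor
      · exact fun h => h.1
      · intro ht
        refine ⟨ht, ?_⟩
        rintro (h | h)
        · rw [h] at ht
          have : v ∈ P.neighborSet x :=
            (P.mem_neighborSet x v).mpr ((P.mem_neighborSet v x).mp ht).symm
          rw [hNx, Set.mem_singleton_iff] at this
          exact hv.2 (by rw [this]; right; rfl)
        · rw [h] at ht
          have : v ∈ P.neighborSet y :=
            (P.mem_neighborSet y v).mpr ((P.mem_neighborSet v y).mp ht).symm
          rw [hNy] at this
          rcases this with h' | h'
          · exact hv.2 (by rw [h']; left; rfl)
          · rw [Set.mem_singleton_iff] at h'; exact hvz h'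
    have hdz' : subDeg P' z = 1 := by
      unfold subDeg
      rw [hnbr' z hzv (by simp [hzx, hzy])]
      have heq : P.neighborSet z \ {x, y} = P.neighborSet z \ {y} := by
        ext t; simp only [Set.mem_diff, Set.mem_insert_iff, Set.mem_singleton_iff]
        constructor
        · exact fun h => ⟨h.1, fun ht => h.2 (Or.inr ht)⟩
        · rintro ⟨ht, hty⟩
          refine ⟨ht, ?_⟩
          rintro (rfl | h)
          exacts [hxNz ht, hty h]
      rw [heq, Set.ncard_diff_singleton_of_mem hyNz,
        show (P.neighborSet z).ncard = 2 from hdz]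
    -- connectivity of P'
    have hpre' : ∀ a b : ↥P'.verts, P'.coe.Reachable a b := by
      rintro ⟨av, ha2⟩ ⟨bv, hb2⟩
      rw [hverts'] at ha2 hb2
      simp only [Set.mem_diff, Set.mem_insert_iff, Set.mem_singleton_iff, not_or] at ha2 hb2
      obtain ⟨wk⟩ := hconn'.preconnected ⟨av, ha2.1⟩ ⟨bv, hb2.1⟩
      set p := wk.bypass with hpdef
      have hp := wk.bypass_isPath
      have havx : ∀ c ∈ p.support, (c : V) ≠ x :=
        avoid_deg_one hx1 p hp ha2.2.1 hb2.2.1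
      have havy : ∀ c ∈ p.support, (c : V) ≠ y := by
        intro c hc hcy
        obtain ⟨a1, ha1, b1, hb1, hab1, hA, hB⟩ := support_internal_nbrs p hp hc
          (by rw [hcy]; exact fun h => ha2.2.2 h.symm) (by rw [hcy]; exact fun h => hb2.2.2 h.symm)
        rw [hcy, hNy] at hA hB
        rcases hA with hA | hA
        · exact havx a1 ha1 hA
        · rcases hB with hB | hB
          · exact havx b1 hb1 hB
          · rw [Set.mem_singleton_iff] at hA hB
            exact hab1 (hA.trans hB.symm)
      refine walk_transfer p ?_ _ _ rfl rfl
      intro c hc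
      simp only [Set.mem_insert_iff, Set.mem_singleton_iff, not_or]
      exact ⟨havx c hc, havy c hc⟩
    have hconnP' : P'.Connected := by
      rw [Subgraph.connected_iff', connected_iff]
      exact ⟨hpre', ⟨⟨z, hz'⟩⟩⟩
    -- endpoint set of P'
    have hE' : {v ∈ P'.verts | subDeg P' v = 1} = {z, w} := by
      ext t
      simp only [Set.mem_setOf_eq, Set.mem_insert_iff, Set.mem_singleton_iff]
      constructor
      · rintro ⟨htv, htd⟩
        by_cases htz : t = z
        · exact Or.inl htz
        · right
          have hpres := hdeg_pres t htv htz
          unfold subDeg at htd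
          rw [hpres] at htd
          have htv' := htv
          rw [hverts'] at htv'
          have htE : t ∈ {v ∈ P.verts | subDeg P v = 1} := ⟨htv'.1, htd⟩
          rw [hEeq] at htE
          rcases htE with rfl | h
          · exact absurd (Set.mem_insert _ _) htv'.2
          · rwa [Set.mem_singleton_iff] at h
      · rintro (h | h) <;> rw [h]
        · exact ⟨hz', hdz'⟩
        · refine ⟨hw', ?_⟩
          unfold subDeg
          rw [hdeg_pres w hw' hwz]
          exact hw1
    have hP'path : IsPathSubgraph P' := by
      refine ⟨hconnP', Or.inr ⟨?_, ?_⟩⟩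
      · rw [hE']; exact Set.ncard_pair (fun h => hwz h.symm)
      · intro v hv
        by_cases hvz : v = z
        · subst hvz; left; exact hdz'
        · unfold subDeg
          rw [hdeg_pres v hv hvz]
          have hv' := hv; rw [hverts'] at hv'
          exact hdeg v hv'.1
    obtain ⟨m', hm'sub, hm'match, hm'verts, hm'card⟩ := ih P' (by rw [hncard']; omega) hP'path
    have he0 : s(x, y) ∉ m' := by
      intro h
      have := hm'verts _ h x (by simp)
      rw [hverts'] at this
      exact this.2 (by left; rfl)
    refine ⟨insert s(x, y) m', ?_, ?_, ?_, ?_⟩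
    · intro e he
      rw [Finset.coe_insert, Set.mem_insert_iff] at he
      rcases he with rfl | he
      · exact (Subgraph.mem_edgeSet).mpr hadj
      · exact Subgraph.edgeSet_mono Subgraph.deleteVerts_le (hm'sub he)
    · intro e he f hf hef v hve hvf
      rw [Finset.mem_insert] at he hf
      have hkey : ∀ g ∈ m', ∀ t, t ∈ g → t ∉ s(x, y) := by
        intro g hg t htg hts
        have := hm'verts g hg t htg
        rw [hverts'] at this
        rcases Sym2.mem_iff.mp hts with rfl | rfl
        · exact this.2 (by left; rfl)
        · exact this.2 (by right; rfl)
      rcases he with rfl | he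
      · rcases hf with rfl | hf
        · exact hef rfl
        · exact hkey f hf v hvf hve
      · rcases hf with rfl | hf
        · exact hkey e he v hve hvf
        · exact hm'match e he f hf hef v hve hvf
    · intro e he v hv
      rw [Finset.mem_insert] at he
      rcases he with rfl | he
      · rcases Sym2.mem_iff.mp hv with rfl | rfl
        exacts [hxv, hyv]
      · have := hm'verts e he v hv
        rw [hverts'] at this
        exact this.1
    · rw [Finset.card_insert_of_notMem he0, hm'card, hncard']
      omega

lemma ncard_biUnion_le {α β : Type*} (T : Finset α) (g : α → Set β) :
    (⋃ a ∈ (T : Set α), g a).ncard ≤ ∑ a ∈ T, (g a).ncard := by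
  classical
  induction T using Finset.induction_on with
  | empty => simp
  | insert _ _ hnot ih =>
    rename_i a T'
    rw [Finset.coe_insert, Set.biUnion_insert, Finset.sum_insert hnot]
    exact le_trans (Set.ncard_union_le _ _) (by omega)

/-- If `M` is a maximum matching of `G`, then for every collection of
vertex-disjoint paths of `G`, each of order at least 4, the total number of vertices
in the collection is at most `(5/4)·2|M|`; in particular `2|M| ≥ (4/5)·opt(G)`. -/
theorem stmt1 {V : Type*} [Fintype V] [DecidableEq V] (G : SimpleGraph V)
    (M : Finset (Sym2 V)) (hM : IsMaxMatchingSet G M) :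
    (∀ Ps : Set G.Subgraph,
      (∀ P ∈ Ps, IsPathSubgraph P ∧ 4 ≤ P.verts.ncard) →
      (Ps.Pairwise fun P Q => Disjoint P.verts Q.verts) →
      4 * (⋃ P ∈ Ps, P.verts).ncard ≤ 5 * (2 * M.card)) ∧
    4 * optValue G ≤ 5 * (2 * M.card) := by
  classical
  have part1 : ∀ Ps : Set G.Subgraph,
      (∀ P ∈ Ps, IsPathSubgraph P ∧ 4 ≤ P.verts.ncard) →
      (Ps.Pairwise fun P Q => Disjoint P.verts Q.verts) →
      4 * (⋃ P ∈ Ps, P.verts).ncard ≤ 5 * (2 * M.card) := by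
    intro Ps hpaths hdisj
    have hfin : Ps.Finite := by
      apply Set.Finite.of_finite_image (f := Subgraph.verts) (Set.toFinite _)
      intro P hP Q hQ hPQ
      by_contra hne
      have hd := hdisj hP hQ hne
      have hne' : P.verts.Nonempty :=
        Set.nonempty_of_ncard_ne_zero (by have := (hpaths P hP).2; omega)
      obtain ⟨v, hv⟩ := hne'
      exact (Set.disjoint_left.mp hd hv) (hPQ ▸ hv)
    set T := hfin.toFinset with hT
    have hmemT : ∀ P, P ∈ T ↔ P ∈ Ps := fun P => hfin.mem_toFinset
    have hex : ∀ P ∈ T, ∃ m : Finset (Sym2 V), ↑m ⊆ P.edgeSet ∧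
        (∀ e ∈ m, ∀ f ∈ m, e ≠ f → ∀ v : V, v ∈ e → v ∉ f) ∧
        (∀ e ∈ m, ∀ v ∈ e, v ∈ P.verts) ∧ m.card = P.verts.ncard / 2 :=
      fun P hP => path_matching P.verts.ncard P le_rfl (hpaths P ((hmemT P).mp hP)).1
    choose! f hf1 hf2 hf3 hf4 using hex
    have hdisjf : ∀ P ∈ T, ∀ Q ∈ T, P ≠ Q → Disjoint (f P) (f Q) := by
      intro P hP Q hQ hPQ
      rw [Finset.disjoint_left]
      intro e heP heQ
      induction e using Sym2.ind with
      | _ a b =>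
        have haP : a ∈ P.verts := hf3 P hP _ heP a (by simp)
        have haQ : a ∈ Q.verts := hf3 Q hQ _ heQ a (by simp)
        exact Set.disjoint_left.mp (hdisj ((hmemT P).mp hP) ((hmemT Q).mp hQ) hPQ) haP haQ
    set M' := T.biUnion f with hM'
    have hcardM' : M'.card = ∑ P ∈ T, (f P).card := Finset.card_biUnion hdisjf
    have hmatch : IsMatchingSet G M' := by
      constructor
      · intro e he
        rw [Finset.coe_biUnion] at he
        simp only [Set.mem_iUnion, Finset.mem_coe] at he
        obtain ⟨P, hP, heP⟩ := he
        exact Subgraph.edgeSet_subset P (hf1 P hP heP)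
      · intro e he g hg heg v hve hvg
        obtain ⟨P, hP, heP⟩ := Finset.mem_biUnion.mp he
        obtain ⟨Q, hQ, hgQ⟩ := Finset.mem_biUnion.mp hg
        by_cases hPQ : P = Q
        · subst hPQ
          exact hf2 P hP e heP g hgQ heg v hve hvg
        · have hvP : v ∈ P.verts := hf3 P hP e heP v hve
          have hvQ : v ∈ Q.verts := hf3 Q hQ g hgQ v hvg
          exact Set.disjoint_left.mp (hdisj ((hmemT P).mp hP) ((hmemT Q).mp hQ) hPQ) hvP hvQ
    have hle1 : M'.card ≤ M.card := hM.2 M' hmatch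
    have hunion : (⋃ P ∈ Ps, P.verts).ncard ≤ ∑ P ∈ T, P.verts.ncard := by
      have hcoe : (⋃ P ∈ Ps, P.verts) = ⋃ P ∈ (T : Set G.Subgraph), P.verts := by
        rw [hT, hfin.coe_toFinset]
      rw [hcoe]
      exact ncard_biUnion_le T _
    have hper : ∀ P ∈ T, 4 * P.verts.ncard ≤ 10 * (f P).card := by
      intro P hP
      have h4 := (hpaths P ((hmemT P).mp hP)).2
      rw [hf4 P hP]
      omega
    calc 4 * (⋃ P ∈ Ps, P.verts).ncard ≤ 4 * ∑ P ∈ T, P.verts.ncard := by omega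
      _ = ∑ P ∈ T, 4 * P.verts.ncard := by rw [Finset.mul_sum]
      _ ≤ ∑ P ∈ T, 10 * (f P).card := Finset.sum_le_sum hper
      _ = 10 * M'.card := by rw [hcardM', Finset.mul_sum]
      _ ≤ 10 * M.card := by omega
      _ = 5 * (2 * M.card) := by ring
  refine ⟨part1, ?_⟩
  have h0 : 0 ∈ {n : ℕ |
      ∃ Ps : Set G.Subgraph,
        (∀ P ∈ Ps, IsPathSubgraph P ∧ 4 ≤ P.verts.ncard) ∧
        (Ps.Pairwise fun P Q => Disjoint P.verts Q.verts) ∧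
        n = (⋃ P ∈ Ps, P.verts).ncard} :=
    ⟨∅, by simp, Set.pairwise_empty _, by simp⟩
  have hbdd : BddAbove {n : ℕ |
      ∃ Ps : Set G.Subgraph,
        (∀ P ∈ Ps, IsPathSubgraph P ∧ 4 ≤ P.verts.ncard) ∧
        (Ps.Pairwise fun P Q => Disjoint P.verts Q.verts) ∧
        n = (⋃ P ∈ Ps, P.verts).ncard} := by
    refine ⟨Fintype.card V, ?_⟩
    rintro n ⟨Ps, h1, h2, rfl⟩
    calc (⋃ P ∈ Ps, P.verts).ncard ≤ (Set.univ : Set V).ncard :=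
          Set.ncard_le_ncard (Set.subset_univ _) Set.finite_univ
      _ = Fintype.card V := by rw [Set.ncard_univ, Nat.card_eq_fintype_card]
  obtain ⟨Ps, h1, h2, heq⟩ := Nat.sSup_mem ⟨0, h0⟩ hbdd
  unfold optValue
  rw [heq]
  exact part1 Ps h1 h2
end

section
/- Let G1 be a finite simple graph and B_1,…,B_h pairwise disjoint nonempty subsets of V(G1). Define an edge-weighted graph G' as follows: V(G') = V(G1) ∪ {x_i, y_i, z_i : 1 ≤ i ≤ h}, where the x_i, y_i, z_i are 3h new vertices; E(G') = E(G1) ∪ {{x_i,v}, {y_i,v} : v ∈ B_i, 1 ≤ i ≤ h} ∪ {{x_i,z_i}, {y_i,z_i} : 1 ≤ i ≤ h}; the edges {x_i,z_i} and {y_i,z_i} have weight 1 and all other edges have weight 0. Define f, g : V(G') → ℕ by f(v) = g(v) = 2 for v ∈ ∪_i B_i; f(v) = 0 and g(v) = 2 for v ∈ V(G1) \ ∪_i B_i; and f(x_i) = f(y_i) = f(z_i) = 0, g(x_i) = g(y_i) = |B_i|, g(z_i) = 1 for each i. Then the maximum weight of an [f,g]-factor of G' equals the maximum weight of a path-cycle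 cover of G1. -/
open SimpleGraph

attribute [local instance] Classical.propDecidable

/-- The auxiliary graph `G'` built from `G1` and the sets `B i`: the new vertices
`x_i, y_i, z_i` are `Sum.inr (i, 0)`, `Sum.inr (i, 1)`, `Sum.inr (i, 2)`. -/
def auxGraph {V1 : Type*} (G1 : SimpleGraph V1) (h : ℕ) (B : Fin h → Set V1) :
    SimpleGraph (V1 ⊕ (Fin h × Fin 3)) :=
  SimpleGraph.fromRel (fun a b =>
    (∃ u v : V1, a = Sum.inl u ∧ b = Sum.inl v ∧ G1.Adj u v) ∨
    (∃ (i : Fin h) (v : V1), v ∈ B i ∧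
      (a = Sum.inr (i, 0) ∨ a = Sum.inr (i, 1)) ∧ b = Sum.inl v) ∨
    (∃ i : Fin h, (a = Sum.inr (i, 0) ∨ a = Sum.inr (i, 1)) ∧ b = Sum.inr (i, 2)))

/-- The set of weight-1 edges of the auxiliary graph: the edges `{x_i, z_i}` and
`{y_i, z_i}`; all other edges have weight 0. -/
def weightOneEdges (V1 : Type*) (h : ℕ) : Set (Sym2 (V1 ⊕ (Fin h × Fin 3))) :=
  {e | ∃ i : Fin h,
    e = s(Sum.inr (i, (0 : Fin 3)), Sum.inr (i, (2 : Fin 3))) ∨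
    e = s(Sum.inr (i, (1 : Fin 3)), Sum.inr (i, (2 : Fin 3)))}

/-- The lower degree bound `f`. -/
noncomputable def fAux {V1 : Type*} (h : ℕ) (B : Fin h → Set V1) :
    (V1 ⊕ (Fin h × Fin 3)) → ℕ
  | Sum.inl v => if ∃ i, v ∈ B i then 2 else 0
  | Sum.inr _ => 0

/-- The upper degree bound `g`. -/
noncomputable def gAux {V1 : Type*} (h : ℕ) (B : Fin h → Set V1) :
    (V1 ⊕ (Fin h × Fin 3)) → ℕ
  | Sum.inl _ => 2
  | Sum.inr (i, j) => if j = (2 : Fin 3) then 1 else (B i).ncard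
open SimpleGraph Sum

section AdjLemmas
variable {V1 : Type*} {G1 : SimpleGraph V1} {h : ℕ} {B : Fin h → Set V1}

lemma aux_adj_inl_inl {u v : V1} :
    (auxGraph G1 h B).Adj (Sum.inl u) (Sum.inl v) ↔ G1.Adj u v := by
  constructor
  · rintro ⟨hne, hrel | hrel⟩ <;>
      rcases hrel with ⟨u', v', h1, h2, h3⟩ | ⟨i, v', _, h1 | h1, h2⟩ | ⟨i, h1 | h1, h2⟩ <;>
      simp_all
    exact h3.symm
  · intro hadj
    exact ⟨by simpa using hadj.ne, Or.inl (Or.inl ⟨u, v, rfl, rfl, hadj⟩)⟩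

lemma aux_adj_inl_classify {v : V1} {b : V1 ⊕ (Fin h × Fin 3)}
    (hadj : (auxGraph G1 h B).Adj (Sum.inl v) b) :
    (∃ u, b = Sum.inl u ∧ G1.Adj v u) ∨
    (∃ i, v ∈ B i ∧ (b = Sum.inr (i, 0) ∨ b = Sum.inr (i, 1))) := by
  obtain ⟨hne, hrel | hrel⟩ := hadj <;>
    rcases hrel with ⟨u', v', h1, h2, h3⟩ | ⟨i, v', hv', h1 | h1, h2⟩ | ⟨i, h1 | h1, h2⟩ <;>
    simp_all
  exact h3.symm

lemma aux_adj_inl_inr {i : Fin h} {v : V1} (hv : v ∈ B i) {j : Fin 3} (hj : j = 0 ∨ j = 1) :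
    (auxGraph G1 h B).Adj (Sum.inl v) (Sum.inr (i, j)) := by
  refine ⟨by simp, Or.inr (Or.inr (Or.inl ⟨i, v, hv, ?_, rfl⟩))⟩
  rcases hj with rfl | rfl
  · exact Or.inl rfl
  · exact Or.inr rfl

lemma aux_adj_cz {i : Fin h} {c : Fin 3} (hc : c = 0 ∨ c = 1) :
    (auxGraph G1 h B).Adj (Sum.inr (i, c)) (Sum.inr (i, 2)) := by
  refine ⟨?_, Or.inl (Or.inr (Or.inr ⟨i, ?_, rfl⟩))⟩
  · rcases hc with rfl | rfl <;> simp
  · rcases hc with rfl | rfl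
    · exact Or.inl rfl
    · exact Or.inr rfl

end AdjLemmas
section DegLemmas
variable {W : Type*} [Fintype W]

lemma edgeDeg_eq_ncard (F : Set (Sym2 W)) (v : W) :
    edgeDeg F v = {e ∈ F | v ∈ e}.ncard := rfl

lemma edgeDeg_empty (v : W) : edgeDeg (∅ : Set (Sym2 W)) v = 0 := by
  simp [edgeDeg]

lemma mem_filter_of_deg {F : Set (Sym2 W)} {v : W} {e : Sym2 W}
    (he : e ∈ F) (hv : v ∈ e) : e ∈ {e ∈ F | v ∈ e} := ⟨he, hv⟩

lemma ncard_le_edgeDeg {F : Set (Sym2 W)} {v : W} {S : Set (Sym2 W)}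
    (hS : S ⊆ {e ∈ F | v ∈ e}) : S.ncard ≤ edgeDeg F v :=
  Set.ncard_le_ncard hS (Set.toFinite _)

end DegLemmas
section Dir1
variable {V1 : Type*} [Fintype V1] [DecidableEq V1] {G1 : SimpleGraph V1}
  {h : ℕ} {B : Fin h → Set V1}

lemma dir1 (hdisj : ∀ i j : Fin h, i ≠ j → Disjoint (B i) (B j))
    (F : Set (Sym2 (V1 ⊕ (Fin h × Fin 3))))
    (hF : F ⊆ (auxGraph G1 h B).edgeSet)
    (hdeg : ∀ a, fAux h B a ≤ edgeDeg F a ∧ edgeDeg F a ≤ gAux h B a) :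
    ∃ C : Set (Sym2 V1), C ⊆ G1.edgeSet ∧ (∀ v, edgeDeg C v ≤ 2) ∧
      (F ∩ weightOneEdges V1 h).ncard ≤ {i : Fin h | Saturates C (B i)}.ncard := by
  classical
  set C : Set (Sym2 V1) := {c | Sym2.map Sum.inl c ∈ F} with hCdef
  have hCsub : C ⊆ G1.edgeSet := by
    intro c
    induction c using Sym2.ind with
    | _ u v =>
      intro hc
      have : (auxGraph G1 h B).Adj (Sum.inl u) (Sum.inl v) := hF hc
      exact aux_adj_inl_inl.mp this
  have hCdeg : ∀ v, edgeDeg C v ≤ 2 := by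
    intro v
    have h1 : edgeDeg C v ≤ edgeDeg F (Sum.inl v) := by
      exact Set.ncard_le_ncard_of_injOn (s := {e ∈ C | v ∈ e})
        (t := {e ∈ F | (Sum.inl v : V1 ⊕ (Fin h × Fin 3)) ∈ e}) (Sym2.map Sum.inl)
        (fun c hc => mem_filter_of_deg hc.1 (Sym2.mem_map.mpr ⟨v, hc.2, rfl⟩))
        ((Sym2.map.injective Sum.inl_injective).injOn) (Set.toFinite _)
    exact h1.trans ((hdeg (Sum.inl v)).2)
  refine ⟨C, hCsub, hCdeg, ?_⟩
  -- key claim: a z-edge in F forces saturation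
  have key : ∀ (i : Fin h) (c : Fin 3), (c = 0 ∨ c = 1) →
      s(Sum.inr (i, c), Sum.inr (i, 2)) ∈ F → Saturates C (B i) := by
    intro i c hc hzF
    by_contra hsat
    have hall : ∀ v ∈ B i, s(Sum.inl v, Sum.inr (i, c)) ∈ F := by
      intro v hv
      have hfv : fAux h B (Sum.inl v) = 2 := by
        have hex : ∃ j, v ∈ B j := ⟨i, hv⟩
        simp [fAux, hex]
      have hdv : edgeDeg F (Sum.inl v) = 2 := by
        have := (hdeg (Sum.inl v)).1
        have := (hdeg (Sum.inl v)).2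
        simp only [hfv, gAux] at *
        omega
      set A := {e ∈ F | (Sum.inl v : V1 ⊕ (Fin h × Fin 3)) ∈ e} with hA
      have hsub : A ⊆ {s(Sum.inl v, Sum.inr (i, (0 : Fin 3))),
          s(Sum.inl v, Sum.inr (i, (1 : Fin 3)))} := by
        rintro e ⟨heF, hev⟩
        obtain ⟨b, rfl⟩ := Sym2.mem_iff_exists.mp hev
        have hadj : (auxGraph G1 h B).Adj (Sum.inl v) b := hF heF
        rcases aux_adj_inl_classify hadj with ⟨u, rfl, hadjvu⟩ | ⟨i', hvi', hb | hb⟩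
        · exfalso
          have hmem : s(v, u) ∈ C := by
            simp only [hCdef, Set.mem_setOf_eq, Sym2.map_pair_eq]
            exact heF
          exact hsat ⟨s(v, u), hmem, v, hv, by simp⟩
        · have : i' = i := by
            by_contra hne
            exact (hdisj i' i hne).ne_of_mem hvi' hv rfl
          subst this; subst hb; left; rfl
        · have : i' = i := by
            by_contra hne
            exact (hdisj i' i hne).ne_of_mem hvi' hv rfl
          subst this; subst hb; right; rfl
      have hpair : ({s(Sum.inl v, Sum.inr (i, (0 : Fin 3))),
          s(Sum.inl v, Sum.inr (i, (1 : Fin 3)))} :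
          Set (Sym2 (V1 ⊕ (Fin h × Fin 3)))).ncard ≤ 2 := by
        refine (Set.ncard_insert_le _ _).trans ?_
        simp
      have hAeq : A = {s(Sum.inl v, Sum.inr (i, (0 : Fin 3))),
          s(Sum.inl v, Sum.inr (i, (1 : Fin 3)))} :=
        Set.eq_of_subset_of_ncard_le hsub (hpair.trans (le_of_eq hdv.symm)) (Set.toFinite _)
      have : s(Sum.inl v, Sum.inr (i, c)) ∈ A := by
        rw [hAeq]
        rcases hc with rfl | rfl
        · left; rfl
        · right; rfl
      exact this.1
    -- now degree at x_i (or y_i) is too big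
    have himg : (fun v : V1 => s(Sum.inl v, Sum.inr (i, c))) '' (B i) ∪
        {s(Sum.inr (i, c), Sum.inr (i, (2 : Fin 3)))} ⊆
        {e ∈ F | (Sum.inr (i, c) : V1 ⊕ (Fin h × Fin 3)) ∈ e} := by
      rintro e (⟨v, hv, rfl⟩ | he)
      · exact ⟨hall v hv, by simp⟩
      · simp only [Set.mem_singleton_iff] at he
        subst he
        exact ⟨hzF, by simp⟩
    have hinj : Function.Injective (fun v : V1 => s(Sum.inl v, Sum.inr (i, c))) := by
      intro a b hab
      simp only [Sym2.eq, Sym2.rel_iff', Prod.swap_prod_mk, Prod.mk.injEq, Sum.inl.injEq] at hab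
      tauto
    have hnotmem : s(Sum.inr (i, c), Sum.inr (i, (2 : Fin 3))) ∉
        (fun v : V1 => s(Sum.inl v, Sum.inr (i, c))) '' (B i) := by
      rintro ⟨v, hv, hveq⟩
      have hcne : c ≠ 2 := by rcases hc with rfl | rfl <;> simp
      simp only [Sym2.eq, Sym2.rel_iff', Prod.swap_prod_mk, Prod.mk.injEq] at hveq
      simp_all
    have hcard : ((fun v : V1 => s(Sum.inl v, Sum.inr (i, c))) '' (B i) ∪
        {s(Sum.inr (i, c), Sum.inr (i, (2 : Fin 3)))}).ncard = (B i).ncard + 1 := by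
      rw [Set.union_singleton, Set.ncard_insert_of_notMem hnotmem (Set.toFinite _),
        Set.ncard_image_of_injective _ hinj]
    have hle := ncard_le_edgeDeg himg
    rw [hcard] at hle
    have hg : gAux h B (Sum.inr (i, c)) = (B i).ncard := by
      have hcne : c ≠ 2 := by rcases hc with rfl | rfl <;> simp
      simp [gAux, hcne]
    have := (hdeg (Sum.inr (i, c))).2
    rw [hg] at this
    omega
  -- weight bound
  set ψ : Fin h → Sym2 (V1 ⊕ (Fin h × Fin 3)) := fun i =>
    if s(Sum.inr (i, (0 : Fin 3)), Sum.inr (i, (2 : Fin 3))) ∈ F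
    then s(Sum.inr (i, (0 : Fin 3)), Sum.inr (i, (2 : Fin 3)))
    else s(Sum.inr (i, (1 : Fin 3)), Sum.inr (i, (2 : Fin 3))) with hψ
  set T : Set (Fin h) := {i | ψ i ∈ F} with hT
  have hsubW : F ∩ weightOneEdges V1 h ⊆ ψ '' T := by
    rintro e ⟨heF, i, he | he⟩
    · subst he
      refine ⟨i, ?_, ?_⟩
      · show ψ i ∈ F
        simp only [hψ]; rw [if_pos heF]; exact heF
      · simp only [hψ]; rw [if_pos heF]
    · subst he
      have h0 : s(Sum.inr (i, (0 : Fin 3)), Sum.inr (i, (2 : Fin 3))) ∉ F := by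
        intro h0
        have hpairsub : ({s(Sum.inr (i, (0 : Fin 3)), Sum.inr (i, (2 : Fin 3))),
            s(Sum.inr (i, (1 : Fin 3)), Sum.inr (i, (2 : Fin 3)))} :
            Set (Sym2 (V1 ⊕ (Fin h × Fin 3)))) ⊆
            {e ∈ F | (Sum.inr (i, (2 : Fin 3)) : V1 ⊕ (Fin h × Fin 3)) ∈ e} := by
          rintro e (rfl | rfl)
          · exact ⟨h0, by simp⟩
          · exact ⟨heF, by simp⟩
        have hne2 : (s(Sum.inr (i, (0 : Fin 3)), Sum.inr (i, (2 : Fin 3))) :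
            Sym2 (V1 ⊕ (Fin h × Fin 3))) ≠
            s(Sum.inr (i, (1 : Fin 3)), Sum.inr (i, (2 : Fin 3))) := by
          intro heq
          simp [Sym2.eq, Sym2.rel_iff', Prod.swap_prod_mk, Prod.mk.injEq, Sum.inr.injEq] at heq
        have h2le := ncard_le_edgeDeg hpairsub
        rw [Set.ncard_pair hne2] at h2le
        have := (hdeg (Sum.inr (i, (2 : Fin 3)))).2
        simp [gAux] at this
        omega
      refine ⟨i, ?_, ?_⟩
      · show ψ i ∈ F
        simp only [hψ]; rw [if_neg h0]; exact heF
      · simp only [hψ]; rw [if_neg h0]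
  have hTsat : T ⊆ {i : Fin h | Saturates C (B i)} := by
    intro i hi
    rw [hT, Set.mem_setOf_eq] at hi
    by_cases h0 : s(Sum.inr (i, (0 : Fin 3)), Sum.inr (i, (2 : Fin 3))) ∈ F
    · exact key i 0 (Or.inl rfl) h0
    · have hψi : ψ i = s(Sum.inr (i, (1 : Fin 3)), Sum.inr (i, (2 : Fin 3))) := by
        simp only [hψ]
        rw [if_neg h0]
      rw [hψi] at hi
      exact key i 1 (Or.inr rfl) hi
  calc (F ∩ weightOneEdges V1 h).ncard ≤ (ψ '' T).ncard :=
        Set.ncard_le_ncard hsubW (Set.toFinite _)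
    _ ≤ T.ncard := Set.ncard_image_le (Set.toFinite _)
    _ ≤ {i : Fin h | Saturates C (B i)}.ncard :=
        Set.ncard_le_ncard hTsat (Set.toFinite _)

end Dir1
section Dir2
variable {V1 : Type*} [Fintype V1] [DecidableEq V1] {G1 : SimpleGraph V1}
  {h : ℕ} {B : Fin h → Set V1}

lemma starInj2 {α β : Type*} (b : β) :
    Function.Injective (fun a : α => s(Sum.inl a, Sum.inr b)) := by
  intro a a' hab
  simp only [Sym2.eq, Sym2.rel_iff', Prod.swap_prod_mk, Prod.mk.injEq,
    Sum.inl.injEq] at hab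
  tauto

lemma zedgeInj2 {α : Type*} {h : ℕ} :
    Function.Injective (fun i : Fin h =>
      (s(Sum.inr (i, (0 : Fin 3)), Sum.inr (i, (2 : Fin 3))) :
        Sym2 (α ⊕ (Fin h × Fin 3)))) := by
  intro i i' hii'
  simp only [Sym2.eq, Sym2.rel_iff', Prod.swap_prod_mk, Prod.mk.injEq,
    Sum.inr.injEq] at hii'
  simp_all

lemma dir2 (hne : ∀ i, (B i).Nonempty)
    (hdisj : ∀ i j : Fin h, i ≠ j → Disjoint (B i) (B j))
    (C : Set (Sym2 V1)) (hC : C ⊆ G1.edgeSet) (hdeg : ∀ v, edgeDeg C v ≤ 2) :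
    ∃ F : Set (Sym2 (V1 ⊕ (Fin h × Fin 3))),
      F ⊆ (auxGraph G1 h B).edgeSet ∧
      (∀ a, fAux h B a ≤ edgeDeg F a ∧ edgeDeg F a ≤ gAux h B a) ∧
      (F ∩ weightOneEdges V1 h).ncard = {i : Fin h | Saturates C (B i)}.ncard := by
  classical
  set F0 : Set (Sym2 (V1 ⊕ (Fin h × Fin 3))) := Sym2.map Sum.inl '' C with hF0
  set X : Set (Sym2 (V1 ⊕ (Fin h × Fin 3))) :=
    ⋃ i : Fin h, (fun v : V1 => s(Sum.inl v, Sum.inr (i, (0 : Fin 3)))) ''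
      {v | v ∈ B i ∧ edgeDeg C v = 0} with hX
  set Y : Set (Sym2 (V1 ⊕ (Fin h × Fin 3))) :=
    ⋃ i : Fin h, (fun v : V1 => s(Sum.inl v, Sum.inr (i, (1 : Fin 3)))) ''
      {v | v ∈ B i ∧ edgeDeg C v ≤ 1} with hY
  set Z : Set (Sym2 (V1 ⊕ (Fin h × Fin 3))) :=
    (fun i : Fin h => s(Sum.inr (i, (0 : Fin 3)), Sum.inr (i, (2 : Fin 3)))) ''
      {i | Saturates C (B i)} with hZ
  -- filtered-set computations
  have hsplit : ∀ w : V1 ⊕ (Fin h × Fin 3),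
      {e ∈ F0 ∪ X ∪ Y ∪ Z | w ∈ e} =
      (({e ∈ F0 | w ∈ e} ∪ {e ∈ X | w ∈ e}) ∪ {e ∈ Y | w ∈ e}) ∪ {e ∈ Z | w ∈ e} := by
    intro w
    ext e
    simp only [Set.mem_setOf_eq, Set.mem_union]
    tauto
  have hF0v : ∀ v : V1, {e ∈ F0 | (Sum.inl v : V1 ⊕ (Fin h × Fin 3)) ∈ e} =
      Sym2.map Sum.inl '' {e ∈ C | v ∈ e} := by
    intro v
    ext e
    constructor
    · rintro ⟨⟨c, hc, rfl⟩, hv⟩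
      obtain ⟨a, ha, hav⟩ := Sym2.mem_map.mp hv
      obtain rfl : a = v := Sum.inl_injective hav
      exact ⟨c, ⟨hc, ha⟩, rfl⟩
    · rintro ⟨c, ⟨hc, hvc⟩, rfl⟩
      exact ⟨⟨c, hc, rfl⟩, Sym2.mem_map.mpr ⟨v, hvc, rfl⟩⟩
  have hF0vcard : ∀ v : V1, (Sym2.map (Sum.inl : V1 → V1 ⊕ (Fin h × Fin 3)) ''
      {e ∈ C | v ∈ e}).ncard = edgeDeg C v := fun v =>
    Set.ncard_image_of_injective _ (Sym2.map.injective Sum.inl_injective)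
  have hF0r : ∀ p : Fin h × Fin 3,
      {e ∈ F0 | (Sum.inr p : V1 ⊕ (Fin h × Fin 3)) ∈ e} = ∅ := by
    intro p
    rw [Set.eq_empty_iff_forall_notMem]
    rintro e ⟨⟨c, hc, rfl⟩, hv⟩
    obtain ⟨a, _, hav⟩ := Sym2.mem_map.mp hv
    exact Sum.inl_ne_inr hav
  -- X computations
  have hXv1 : ∀ (v : V1) (i₀ : Fin h), v ∈ B i₀ → edgeDeg C v = 0 →
      {e ∈ X | (Sum.inl v : V1 ⊕ (Fin h × Fin 3)) ∈ e} =
        {s(Sum.inl v, Sum.inr (i₀, (0 : Fin 3)))} := by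
    intro v i₀ hv h0
    ext e
    constructor
    · rintro ⟨heX, hve⟩
      rw [hX] at heX
      simp only [Set.mem_iUnion, Set.mem_image, Set.mem_setOf_eq] at heX
      obtain ⟨i, u, ⟨hu, hu0⟩, rfl⟩ := heX
      rcases Sym2.mem_iff.mp hve with h1 | h1
      · obtain rfl : u = v := (Sum.inl_injective h1.symm)
        have : i = i₀ := by
          by_contra hne'
          exact (hdisj i i₀ hne').ne_of_mem hu hv rfl
        subst this; rfl
      · exact absurd h1 (by simp)
    · rintro rfl
      refine ⟨?_, by simp⟩
      rw [hX]
      simp only [Set.mem_iUnion, Set.mem_image, Set.mem_setOf_eq]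
      exact ⟨i₀, v, ⟨hv, h0⟩, rfl⟩
  have hXv0 : ∀ v : V1, ¬(∃ i, v ∈ B i ∧ edgeDeg C v = 0) →
      {e ∈ X | (Sum.inl v : V1 ⊕ (Fin h × Fin 3)) ∈ e} = ∅ := by
    intro v hno
    rw [Set.eq_empty_iff_forall_notMem]
    rintro e ⟨heX, hve⟩
    rw [hX] at heX
    simp only [Set.mem_iUnion, Set.mem_image, Set.mem_setOf_eq] at heX
    obtain ⟨i, u, ⟨hu, hu0⟩, rfl⟩ := heX
    rcases Sym2.mem_iff.mp hve with h1 | h1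
    · obtain rfl : u = v := (Sum.inl_injective h1.symm)
      exact hno ⟨i, hu, hu0⟩
    · exact absurd h1 (by simp)
  have hXx : ∀ i : Fin h, {e ∈ X | (Sum.inr (i, (0 : Fin 3)) : V1 ⊕ (Fin h × Fin 3)) ∈ e} =
      (fun v : V1 => s(Sum.inl v, Sum.inr (i, (0 : Fin 3)))) ''
        {v | v ∈ B i ∧ edgeDeg C v = 0} := by
    intro i
    ext e
    constructor
    · rintro ⟨heX, hve⟩
      rw [hX] at heX
      simp only [Set.mem_iUnion, Set.mem_image, Set.mem_setOf_eq] at heX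
      obtain ⟨i', u, hu, rfl⟩ := heX
      rcases Sym2.mem_iff.mp hve with h1 | h1
      · exact absurd h1 (by simp)
      · obtain rfl : i' = i := by
          simp only [Sum.inr.injEq, Prod.mk.injEq] at h1
          exact h1.1.symm
        exact ⟨u, hu, rfl⟩
    · rintro ⟨u, hu, rfl⟩
      refine ⟨?_, by simp⟩
      rw [hX]
      simp only [Set.mem_iUnion, Set.mem_image, Set.mem_setOf_eq]
      exact ⟨i, u, hu, rfl⟩
  have hXr : ∀ (i : Fin h) (j : Fin 3), j ≠ 0 →
      {e ∈ X | (Sum.inr (i, j) : V1 ⊕ (Fin h × Fin 3)) ∈ e} = ∅ := by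
    intro i j hj
    rw [Set.eq_empty_iff_forall_notMem]
    rintro e ⟨heX, hve⟩
    rw [hX] at heX
    simp only [Set.mem_iUnion, Set.mem_image, Set.mem_setOf_eq] at heX
    obtain ⟨i', u, hu, rfl⟩ := heX
    rcases Sym2.mem_iff.mp hve with h1 | h1
    · exact absurd h1 (by simp)
    · simp only [Sum.inr.injEq, Prod.mk.injEq] at h1
      exact hj h1.2
  -- Y computations
  have hYv1 : ∀ (v : V1) (i₀ : Fin h), v ∈ B i₀ → edgeDeg C v ≤ 1 →
      {e ∈ Y | (Sum.inl v : V1 ⊕ (Fin h × Fin 3)) ∈ e} =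
        {s(Sum.inl v, Sum.inr (i₀, (1 : Fin 3)))} := by
    intro v i₀ hv h0
    ext e
    constructor
    · rintro ⟨heX, hve⟩
      rw [hY] at heX
      simp only [Set.mem_iUnion, Set.mem_image, Set.mem_setOf_eq] at heX
      obtain ⟨i, u, ⟨hu, hu0⟩, rfl⟩ := heX
      rcases Sym2.mem_iff.mp hve with h1 | h1
      · obtain rfl : u = v := (Sum.inl_injective h1.symm)
        have : i = i₀ := by
          by_contra hne'
          exact (hdisj i i₀ hne').ne_of_mem hu hv rfl
        subst this; rfl
      · exact absurd h1 (by simp)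
    · rintro rfl
      refine ⟨?_, by simp⟩
      rw [hY]
      simp only [Set.mem_iUnion, Set.mem_image, Set.mem_setOf_eq]
      exact ⟨i₀, v, ⟨hv, h0⟩, rfl⟩
  have hYv0 : ∀ v : V1, ¬(∃ i, v ∈ B i ∧ edgeDeg C v ≤ 1) →
      {e ∈ Y | (Sum.inl v : V1 ⊕ (Fin h × Fin 3)) ∈ e} = ∅ := by
    intro v hno
    rw [Set.eq_empty_iff_forall_notMem]
    rintro e ⟨heX, hve⟩
    rw [hY] at heX
    simp only [Set.mem_iUnion, Set.mem_image, Set.mem_setOf_eq] at heX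
    obtain ⟨i, u, ⟨hu, hu0⟩, rfl⟩ := heX
    rcases Sym2.mem_iff.mp hve with h1 | h1
    · obtain rfl : u = v := (Sum.inl_injective h1.symm)
      exact hno ⟨i, hu, hu0⟩
    · exact absurd h1 (by simp)
  have hYy : ∀ i : Fin h, {e ∈ Y | (Sum.inr (i, (1 : Fin 3)) : V1 ⊕ (Fin h × Fin 3)) ∈ e} =
      (fun v : V1 => s(Sum.inl v, Sum.inr (i, (1 : Fin 3)))) ''
        {v | v ∈ B i ∧ edgeDeg C v ≤ 1} := by
    intro i
    ext e
    constructor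
    · rintro ⟨heX, hve⟩
      rw [hY] at heX
      simp only [Set.mem_iUnion, Set.mem_image, Set.mem_setOf_eq] at heX
      obtain ⟨i', u, hu, rfl⟩ := heX
      rcases Sym2.mem_iff.mp hve with h1 | h1
      · exact absurd h1 (by simp)
      · obtain rfl : i' = i := by
          simp only [Sum.inr.injEq, Prod.mk.injEq] at h1
          exact h1.1.symm
        exact ⟨u, hu, rfl⟩
    · rintro ⟨u, hu, rfl⟩
      refine ⟨?_, by simp⟩
      rw [hY]
      simp only [Set.mem_iUnion, Set.mem_image, Set.mem_setOf_eq]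
      exact ⟨i, u, hu, rfl⟩
  have hYr : ∀ (i : Fin h) (j : Fin 3), j ≠ 1 →
      {e ∈ Y | (Sum.inr (i, j) : V1 ⊕ (Fin h × Fin 3)) ∈ e} = ∅ := by
    intro i j hj
    rw [Set.eq_empty_iff_forall_notMem]
    rintro e ⟨heX, hve⟩
    rw [hY] at heX
    simp only [Set.mem_iUnion, Set.mem_image, Set.mem_setOf_eq] at heX
    obtain ⟨i', u, hu, rfl⟩ := heX
    rcases Sym2.mem_iff.mp hve with h1 | h1
    · exact absurd h1 (by simp)
    · simp only [Sum.inr.injEq, Prod.mk.injEq] at h1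
      exact hj h1.2
  -- Z computations
  have hZv : ∀ v : V1, {e ∈ Z | (Sum.inl v : V1 ⊕ (Fin h × Fin 3)) ∈ e} = ∅ := by
    intro v
    rw [Set.eq_empty_iff_forall_notMem]
    rintro e ⟨heZ, hve⟩
    rw [hZ] at heZ
    obtain ⟨i, _, rfl⟩ := heZ
    rcases Sym2.mem_iff.mp hve with h1 | h1 <;> exact absurd h1 (by simp)
  have hZc : ∀ (i : Fin h) (c : Fin 3), (c = 0 ∨ c = 2) →
      {e ∈ Z | (Sum.inr (i, c) : V1 ⊕ (Fin h × Fin 3)) ∈ e} =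
      if Saturates C (B i)
      then {s(Sum.inr (i, (0 : Fin 3)), Sum.inr (i, (2 : Fin 3)))} else ∅ := by
    intro i c hc
    ext e
    constructor
    · rintro ⟨heZ, hve⟩
      rw [hZ] at heZ
      obtain ⟨i', hi', rfl⟩ := heZ
      have : i' = i := by
        rcases Sym2.mem_iff.mp hve with h1 | h1 <;>
        · simp only [Sum.inr.injEq, Prod.mk.injEq] at h1
          exact h1.1.symm
      subst this
      have hsat' : Saturates C (B i') := hi'
      rw [if_pos hsat']
      rfl
    · intro he
      by_cases hsat : Saturates C (B i)
      · rw [if_pos hsat] at he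
        subst he
        refine ⟨?_, ?_⟩
        · rw [hZ]; exact ⟨i, hsat, rfl⟩
        · rcases hc with rfl | rfl <;> simp
      · rw [if_neg hsat] at he
        exact absurd he (Set.notMem_empty _)
  have hZy : ∀ i : Fin h,
      {e ∈ Z | (Sum.inr (i, (1 : Fin 3)) : V1 ⊕ (Fin h × Fin 3)) ∈ e} = ∅ := by
    intro i
    rw [Set.eq_empty_iff_forall_notMem]
    rintro e ⟨heZ, hve⟩
    rw [hZ] at heZ
    obtain ⟨i', _, rfl⟩ := heZ
    rcases Sym2.mem_iff.mp hve with h1 | h1 <;>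
    · simp only [Sum.inr.injEq, Prod.mk.injEq] at h1
      simp at h1
  refine ⟨F0 ∪ X ∪ Y ∪ Z, ?_, ?_, ?_⟩
  · -- subset of edge set
    rintro e (((he | he) | he) | he)
    · rw [hF0] at he
      obtain ⟨c, hc, rfl⟩ := he
      revert hc
      induction c using Sym2.ind with
      | _ u v =>
        intro hc
        rw [Sym2.map_pair_eq]
        exact (SimpleGraph.mem_edgeSet _).mpr (aux_adj_inl_inl.mpr
          ((SimpleGraph.mem_edgeSet _).mp (hC hc)))
    · rw [hX] at he
      simp only [Set.mem_iUnion, Set.mem_image, Set.mem_setOf_eq] at he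
      obtain ⟨i, u, ⟨hu, _⟩, rfl⟩ := he
      exact (SimpleGraph.mem_edgeSet _).mpr (aux_adj_inl_inr hu (Or.inl rfl))
    · rw [hY] at he
      simp only [Set.mem_iUnion, Set.mem_image, Set.mem_setOf_eq] at he
      obtain ⟨i, u, ⟨hu, _⟩, rfl⟩ := he
      exact (SimpleGraph.mem_edgeSet _).mpr (aux_adj_inl_inr hu (Or.inr rfl))
    · rw [hZ] at he
      obtain ⟨i, _, rfl⟩ := he
      exact (SimpleGraph.mem_edgeSet _).mpr (aux_adj_cz (Or.inl rfl))
  · -- degree constraints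
    rintro (v | ⟨i, j⟩)
    · -- vertices of G1
      by_cases hvB : ∃ i, v ∈ B i
      · obtain ⟨i₀, hvi₀⟩ := hvB
        have hf : fAux h B (Sum.inl v) = 2 := by
          have hex : ∃ j, v ∈ B j := ⟨i₀, hvi₀⟩
          simp [fAux, hex]
        have hg : gAux h B (Sum.inl v) = 2 := rfl
        have hd2 : edgeDeg (F0 ∪ X ∪ Y ∪ Z) (Sum.inl v) = 2 := by
          rw [edgeDeg_eq_ncard, hsplit, hF0v, hZv, Set.union_empty]
          have hcv := hdeg v
          have hcases : edgeDeg C v = 0 ∨ edgeDeg C v = 1 ∨ edgeDeg C v = 2 := by omega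
          rcases hcases with h0 | h1 | h2
          · have hCe : {e ∈ C | v ∈ e} = ∅ :=
              (Set.ncard_eq_zero (Set.toFinite _)).mp h0
            rw [hCe, Set.image_empty, Set.empty_union,
              hXv1 v i₀ hvi₀ h0, hYv1 v i₀ hvi₀ (by omega)]
            rw [Set.union_comm, Set.union_singleton]
            rw [Set.ncard_insert_of_notMem (by simp) (Set.toFinite _)]
            simp
          · rw [hXv0 v (by rintro ⟨i, _, h⟩; omega), Set.union_empty,
              hYv1 v i₀ hvi₀ (by omega)]
            rw [Set.union_singleton,
              Set.ncard_insert_of_notMem ?_ (Set.toFinite _), hF0vcard, h1]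
            rintro ⟨c, _, hceq⟩
            have : (Sum.inr (i₀, (1 : Fin 3)) : V1 ⊕ (Fin h × Fin 3)) ∈
                Sym2.map Sum.inl c := by rw [hceq]; simp
            obtain ⟨a, _, hav⟩ := Sym2.mem_map.mp this
            exact Sum.inl_ne_inr hav
          · rw [hXv0 v (by rintro ⟨i, _, h⟩; omega), Set.union_empty,
              hYv0 v (by rintro ⟨i, _, h⟩; omega), Set.union_empty, hF0vcard, h2]
        rw [hf, hg, hd2]
        exact ⟨le_refl 2, le_refl 2⟩
      · have hf : fAux h B (Sum.inl v) = 0 := by simp [fAux, hvB]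
        have hg : gAux h B (Sum.inl v) = 2 := rfl
        rw [hf, hg]
        refine ⟨Nat.zero_le _, ?_⟩
        rw [edgeDeg_eq_ncard, hsplit, hF0v, hZv, Set.union_empty,
          hXv0 v (by rintro ⟨i, hi, _⟩; exact hvB ⟨i, hi⟩), Set.union_empty,
          hYv0 v (by rintro ⟨i, hi, _⟩; exact hvB ⟨i, hi⟩), Set.union_empty,
          hF0vcard]
        exact hdeg v
    · -- new vertices
      have hf : fAux h B (Sum.inr (i, j)) = 0 := rfl
      rw [hf]
      refine ⟨Nat.zero_le _, ?_⟩
      have hj3 : j = 0 ∨ j = 1 ∨ j = 2 := by omega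
      rcases hj3 with rfl | rfl | rfl
      · -- x_i
        have hg : gAux h B (Sum.inr (i, (0 : Fin 3))) = (B i).ncard := by
          simp [gAux]
        rw [hg, edgeDeg_eq_ncard, hsplit, hF0r, hXx, hYr i 0 (by simp),
          Set.union_empty, Set.empty_union, hZc i 0 (Or.inl rfl)]
        by_cases hsat : Saturates C (B i)
        · rw [if_pos hsat, Set.union_singleton,
            Set.ncard_insert_of_notMem ?notmem (Set.toFinite _),
            Set.ncard_image_of_injective _ (starInj2 _)]
          case notmem =>
            rintro ⟨u, _, hueq⟩
            simp only [Sym2.eq, Sym2.rel_iff', Prod.swap_prod_mk,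
              Prod.mk.injEq] at hueq
            rcases hueq with ⟨h1, _⟩ | ⟨h1, _⟩ <;> exact Sum.inl_ne_inr h1
          obtain ⟨e₀, he₀, v₀, hv₀, hv₀e⟩ := hsat
          have hv₀deg : 1 ≤ edgeDeg C v₀ := by
            rw [edgeDeg_eq_ncard]
            rw [Nat.one_le_iff_ne_zero]
            intro hzero
            have : {e ∈ C | v₀ ∈ e} = ∅ := (Set.ncard_eq_zero (Set.toFinite _)).mp hzero
            exact absurd (mem_filter_of_deg he₀ hv₀e) (this ▸ Set.notMem_empty _)
          have hss : {v | v ∈ B i ∧ edgeDeg C v = 0} ⊂ B i := by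
            constructor
            · exact fun u hu => hu.1
            · intro hsup
              have := (hsup hv₀).2
              omega
          have := Set.ncard_lt_ncard hss (Set.toFinite _)
          omega
        · rw [if_neg hsat, Set.union_empty,
            Set.ncard_image_of_injective _ (starInj2 _)]
          exact Set.ncard_le_ncard (fun u hu => hu.1) (Set.toFinite _)
      · -- y_i
        have hg : gAux h B (Sum.inr (i, (1 : Fin 3))) = (B i).ncard := by
          simp [gAux]
        rw [hg, edgeDeg_eq_ncard, hsplit, hF0r, hXr i 1 (by simp), hYy, hZy,
          Set.union_empty, Set.union_empty, Set.empty_union,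
          Set.ncard_image_of_injective _ (starInj2 _)]
        exact Set.ncard_le_ncard (fun u hu => hu.1) (Set.toFinite _)
      · -- z_i
        have hg : gAux h B (Sum.inr (i, (2 : Fin 3))) = 1 := by simp [gAux]
        rw [hg, edgeDeg_eq_ncard, hsplit, hF0r, hXr i 2 (by simp), hYr i 2 (by simp),
          Set.union_empty, Set.union_empty, Set.empty_union, hZc i 2 (Or.inr rfl)]
        by_cases hsat : Saturates C (B i)
        · rw [if_pos hsat]; simp
        · rw [if_neg hsat]; simp
  · -- weight
    have hFW : (F0 ∪ X ∪ Y ∪ Z) ∩ weightOneEdges V1 h = Z := by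
      apply subset_antisymm
      · rintro e ⟨hef, i, he | he⟩ <;> subst he <;>
          rcases hef with ((he | he) | he) | he
        · exfalso
          rw [hF0] at he
          obtain ⟨c, _, hceq⟩ := he
          have : (Sum.inr (i, (2 : Fin 3)) : V1 ⊕ (Fin h × Fin 3)) ∈
              Sym2.map Sum.inl c := by rw [hceq]; simp
          obtain ⟨a, _, hav⟩ := Sym2.mem_map.mp this
          exact Sum.inl_ne_inr hav
        · exfalso
          rw [hX] at he
          simp only [Set.mem_iUnion, Set.mem_image, Set.mem_setOf_eq] at he
          obtain ⟨i', u, _, heq⟩ := he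
          simp only [Sym2.eq, Sym2.rel_iff', Prod.swap_prod_mk, Prod.mk.injEq] at heq
          rcases heq with ⟨h1, _⟩ | ⟨h1, _⟩ <;> exact Sum.inl_ne_inr h1
        · exfalso
          rw [hY] at he
          simp only [Set.mem_iUnion, Set.mem_image, Set.mem_setOf_eq] at he
          obtain ⟨i', u, _, heq⟩ := he
          simp only [Sym2.eq, Sym2.rel_iff', Prod.swap_prod_mk, Prod.mk.injEq] at heq
          rcases heq with ⟨h1, _⟩ | ⟨h1, _⟩ <;> exact Sum.inl_ne_inr h1
        · exact he
        · exfalso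
          rw [hF0] at he
          obtain ⟨c, _, hceq⟩ := he
          have : (Sum.inr (i, (2 : Fin 3)) : V1 ⊕ (Fin h × Fin 3)) ∈
              Sym2.map Sum.inl c := by rw [hceq]; simp
          obtain ⟨a, _, hav⟩ := Sym2.mem_map.mp this
          exact Sum.inl_ne_inr hav
        · exfalso
          rw [hX] at he
          simp only [Set.mem_iUnion, Set.mem_image, Set.mem_setOf_eq] at he
          obtain ⟨i', u, _, heq⟩ := he
          simp only [Sym2.eq, Sym2.rel_iff', Prod.swap_prod_mk, Prod.mk.injEq] at heq
          rcases heq with ⟨h1, _⟩ | ⟨h1, _⟩ <;> exact Sum.inl_ne_inr h1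
        · exfalso
          rw [hY] at he
          simp only [Set.mem_iUnion, Set.mem_image, Set.mem_setOf_eq] at he
          obtain ⟨i', u, _, heq⟩ := he
          simp only [Sym2.eq, Sym2.rel_iff', Prod.swap_prod_mk, Prod.mk.injEq] at heq
          rcases heq with ⟨h1, _⟩ | ⟨h1, _⟩ <;> exact Sum.inl_ne_inr h1
        · exfalso
          rw [hZ] at he
          obtain ⟨i', _, heq⟩ := he
          simp only [Sym2.eq, Sym2.rel_iff', Prod.swap_prod_mk, Prod.mk.injEq,
            Sum.inr.injEq] at heq
          rcases heq with ⟨⟨_, h2⟩, _⟩ | ⟨⟨_, h2⟩, _⟩ <;> exact absurd h2 (by decide)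
      · intro e he
        refine ⟨Or.inr he, ?_⟩
        rw [hZ] at he
        obtain ⟨i, _, rfl⟩ := he
        exact ⟨i, Or.inl rfl⟩
    rw [hFW, hZ]
    exact Set.ncard_image_of_injective _ zedgeInj2

end Dir2
/-- the maximum weight of an `[f,g]`-factor of the auxiliary graph `G'`
equals the maximum weight of a path-cycle cover of `G1` (the weight of a path-cycle
cover being the number of sets `B i` it saturates). -/
theorem stmt3 {V1 : Type*} [Fintype V1] [DecidableEq V1] (G1 : SimpleGraph V1)
    (h : ℕ) (B : Fin h → Set V1)
    (hne : ∀ i, (B i).Nonempty)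
    (hdisj : ∀ i j : Fin h, i ≠ j → Disjoint (B i) (B j)) :
    sSup {w : ℕ | ∃ F : Set (Sym2 (V1 ⊕ (Fin h × Fin 3))),
        F ⊆ (auxGraph G1 h B).edgeSet ∧
        (∀ a, fAux h B a ≤ edgeDeg F a ∧ edgeDeg F a ≤ gAux h B a) ∧
        w = (F ∩ weightOneEdges V1 h).ncard} =
    sSup {w : ℕ | ∃ C : Set (Sym2 V1),
        C ⊆ G1.edgeSet ∧ (∀ v, edgeDeg C v ≤ 2) ∧
        w = {i : Fin h | Saturates C (B i)}.ncard} := by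
  classical
  have hdegE : ∀ v : V1, edgeDeg (∅ : Set (Sym2 V1)) v ≤ 2 := by
    intro v; rw [edgeDeg_empty]; omega
  have hbddR : BddAbove {w : ℕ | ∃ C : Set (Sym2 V1),
      C ⊆ G1.edgeSet ∧ (∀ v, edgeDeg C v ≤ 2) ∧
      w = {i : Fin h | Saturates C (B i)}.ncard} := by
    refine ⟨Nat.card (Fin h), ?_⟩
    rintro w ⟨C, _, _, rfl⟩
    rw [← Set.ncard_univ]
    exact Set.ncard_le_ncard (Set.subset_univ _) (Set.toFinite _)
  have hbddL : BddAbove {w : ℕ | ∃ F : Set (Sym2 (V1 ⊕ (Fin h × Fin 3))),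
      F ⊆ (auxGraph G1 h B).edgeSet ∧
      (∀ a, fAux h B a ≤ edgeDeg F a ∧ edgeDeg F a ≤ gAux h B a) ∧
      w = (F ∩ weightOneEdges V1 h).ncard} := by
    refine ⟨Nat.card (Sym2 (V1 ⊕ (Fin h × Fin 3))), ?_⟩
    rintro w ⟨F, _, _, rfl⟩
    rw [← Set.ncard_univ]
    exact Set.ncard_le_ncard (Set.subset_univ _) (Set.toFinite _)
  have hneR : {w : ℕ | ∃ C : Set (Sym2 V1),
      C ⊆ G1.edgeSet ∧ (∀ v, edgeDeg C v ≤ 2) ∧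
      w = {i : Fin h | Saturates C (B i)}.ncard}.Nonempty := by
    refine ⟨0, ∅, Set.empty_subset _, hdegE, ?_⟩
    simp [Saturates]
  have hneL : {w : ℕ | ∃ F : Set (Sym2 (V1 ⊕ (Fin h × Fin 3))),
      F ⊆ (auxGraph G1 h B).edgeSet ∧
      (∀ a, fAux h B a ≤ edgeDeg F a ∧ edgeDeg F a ≤ gAux h B a) ∧
      w = (F ∩ weightOneEdges V1 h).ncard}.Nonempty := by
    obtain ⟨F, h1, h2, _⟩ := dir2 (G1 := G1) hne hdisj ∅ (Set.empty_subset _) hdegE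
    exact ⟨_, F, h1, h2, rfl⟩
  apply le_antisymm
  · apply csSup_le hneL
    rintro w ⟨F, hF1, hF2, rfl⟩
    obtain ⟨C, hC1, hC2, hle⟩ := dir1 hdisj F hF1 hF2
    exact le_csSup_of_le hbddR ⟨C, hC1, hC2, rfl⟩ hle
  · apply csSup_le hneR
    rintro w ⟨C, hC1, hC2, rfl⟩
    obtain ⟨F, h1, h2, h3⟩ := dir2 (G1 := G1) hne hdisj C hC1 hC2
    exact le_csSup_of_le hbddL ⟨F, h1, h2, rfl⟩ (le_of_eq h3.symm)
end

section
/- Let G be a finite simple graph and 𝒦 a collection of pairwise disjoint nonempty subsets of V(G), with a designated subcollection ℬ ⊆ 𝒦 of 'bad' members. Let G1 be the set of all edges {u,v} of G such that u and v lie in two different members of 𝒦, at least one of which is bad. Let C ⊆ G1 be a path-cycle cover of (V(G), G1) such that for every edge e ∈ C, the set C \ {e} saturates strictly fewer bad members of 𝒦 than C does. Define a graph 𝒢 on vertex set 𝒦 by joining K, K' ∈ 𝒦 whenever some edge of C has one endpoint in K and the other in K'. Then: (1) every connected component of 𝒢 is an isolated vertex, a single edge, or a star; (2) if a component of 𝒢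 is a single edge, then at least one of its two endpoints is a bad member; (3) if a component of 𝒢 is a star, then every satellite (non-center vertex) of the star is a bad member. -/
open SimpleGraph

/-- structure of the contracted graph `𝒢` on the members of `𝒦` induced
by an inclusionwise-minimal maximum path-cycle cover `C`: every connected component is
an isolated vertex, a single edge, or a star (uniformly: it has a vertex `K₀` such that
every other vertex of the component has neighbor set exactly `{K₀}`); if a component is
a single edge then one of its endpoints is bad; and if a component is a star (it has at
least 3 vertices) then all satellites are bad. -/
theorem stmt5 {V : Type*} [Fintype V] [DecidableEq V] (G : SimpleGraph V)
    (𝒦 ℬ : Set (Set V)) (hBK : ℬ ⊆ 𝒦)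
    (hne : ∀ K ∈ 𝒦, K.Nonempty)
    (hdisj : 𝒦.Pairwise fun K K' => Disjoint K K')
    (G1 : Set (Sym2 V))
    (hG1 : G1 = {e | e ∈ G.edgeSet ∧ ∃ u v : V, e = s(u, v) ∧
      ∃ K ∈ 𝒦, ∃ K' ∈ 𝒦, K ≠ K' ∧ u ∈ K ∧ v ∈ K' ∧ (K ∈ ℬ ∨ K' ∈ ℬ)})
    (C : Set (Sym2 V)) (hCsub : C ⊆ G1) (hCdeg : ∀ v, edgeDeg C v ≤ 2)
    (hCmin : ∀ e ∈ C,
      ({K ∈ ℬ | Saturates (C \ {e}) K}).ncard < ({K ∈ ℬ | Saturates C K}).ncard)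
    (𝒢 : SimpleGraph ↥𝒦)
    (h𝒢 : 𝒢 = SimpleGraph.fromRel (fun K K' : ↥𝒦 =>
      ∃ e ∈ C, ∃ u v : V, e = s(u, v) ∧ u ∈ (K : Set V) ∧ v ∈ (K' : Set V))) :
    ∀ c : 𝒢.ConnectedComponent,
      (∃ K₀ ∈ c.supp, ∀ K ∈ c.supp, K ≠ K₀ → 𝒢.neighborSet K = {K₀}) ∧
      (∀ K₁ K₂ : ↥𝒦, K₁ ≠ K₂ → c.supp = {K₁, K₂} →
        ((K₁ : Set V) ∈ ℬ ∨ (K₂ : Set V) ∈ ℬ)) ∧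
      (3 ≤ c.supp.ncard → ∃ K₀ ∈ c.supp,
        (∀ K ∈ c.supp, K ≠ K₀ → 𝒢.neighborSet K = {K₀}) ∧
        (∀ K ∈ c.supp, K ≠ K₀ → (K : Set V) ∈ ℬ)) := by
  subst h𝒢 hG1
  -- two members of 𝒦 sharing a vertex are equal
  have hmem : ∀ (A B : ↥𝒦) (w : V), w ∈ (A : Set V) → w ∈ (B : Set V) → A = B := by
    intro A B w hA hB
    by_contra hne'
    have hAB : (A : Set V) ≠ (B : Set V) := fun h => hne' (Subtype.ext h)
    exact Set.disjoint_left.1 (hdisj A.2 B.2 hAB) hA hB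
  -- every edge of C privately saturates some bad member
  have hpriv : ∀ e ∈ C, ∃ B ∈ ℬ, (∃ w ∈ B, w ∈ e) ∧
      ∀ f ∈ C, (∃ w ∈ B, w ∈ f) → f = e := by
    intro e he
    have hlt := hCmin e he
    have hsub : {K ∈ ℬ | Saturates (C \ {e}) K} ⊆ {K ∈ ℬ | Saturates C K} := by
      rintro K ⟨hK, f, hf, w, hw, hwf⟩
      exact ⟨hK, f, hf.1, w, hw, hwf⟩
    have hne' : {K ∈ ℬ | Saturates (C \ {e}) K} ≠ {K ∈ ℬ | Saturates C K} := by
      intro h; rw [h] at hlt; exact lt_irrefl _ hlt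
    obtain ⟨B, hBin, hBout⟩ := Set.exists_of_ssubset (hsub.ssubset_of_ne hne')
    obtain ⟨hBbad, f, hf, w, hw, hwf⟩ := hBin
    have hnot : ¬ Saturates (C \ {e}) B := fun h => hBout ⟨hBbad, h⟩
    have huniq : ∀ g ∈ C, (∃ w ∈ B, w ∈ g) → g = e := by
      intro g hg ⟨w', hw', hw'g⟩
      by_contra hge
      exact hnot ⟨g, ⟨hg, hge⟩, w', hw', hw'g⟩
    exact ⟨B, hBbad, ⟨w, hw, huniq f hf ⟨w, hw, hwf⟩ ▸ hwf⟩, huniq⟩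
  set 𝒢 := SimpleGraph.fromRel (fun K K' : ↥𝒦 =>
      ∃ e ∈ C, ∃ u v : V, e = s(u, v) ∧ u ∈ (K : Set V) ∧ v ∈ (K' : Set V)) with h𝒢
  -- computing the neighbor set of a privately-saturated endpoint member
  have core : ∀ e ∈ C, ∀ (u v : V) (X Y : ↥𝒦), e = s(u, v) → u ∈ (X : Set V) →
      v ∈ (Y : Set V) → X ≠ Y → (∀ f ∈ C, (∃ w ∈ (X : Set V), w ∈ f) → f = e) →
      𝒢.neighborSet X = {Y} := by
    intro e he u v X Y heq hu hv hXY huniq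
    ext Z
    simp only [SimpleGraph.mem_neighborSet, Set.mem_singleton_iff]
    constructor
    · intro hadj
      rw [h𝒢, SimpleGraph.fromRel_adj] at hadj
      obtain ⟨hXZ, h | h⟩ := hadj
      · obtain ⟨f, hf, a, b, hfe, ha, hb⟩ := h
        have hfeq : f = e := huniq f hf ⟨a, ha, by rw [hfe]; exact Sym2.mem_mk_left a b⟩
        have : s(a, b) = s(u, v) := by rw [← hfe, hfeq, heq]
        rcases Sym2.eq_iff.mp this with ⟨rfl, rfl⟩ | ⟨rfl, rfl⟩
        · exact hmem Z Y b hb hv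
        · exact absurd (hmem X Y a ha hv) hXY
      · obtain ⟨f, hf, a, b, hfe, ha, hb⟩ := h
        have hfeq : f = e := huniq f hf ⟨b, hb, by rw [hfe]; exact Sym2.mem_mk_right a b⟩
        have : s(a, b) = s(u, v) := by rw [← hfe, hfeq, heq]
        rcases Sym2.eq_iff.mp this with ⟨rfl, rfl⟩ | ⟨rfl, rfl⟩
        · exact absurd (hmem X Y b hb hv) hXY
        · exact hmem Z Y a ha hv
    · rintro rfl
      rw [h𝒢, SimpleGraph.fromRel_adj]
      exact ⟨hXY, Or.inl ⟨e, he, u, v, heq, hu, hv⟩⟩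
  -- every edge of 𝒢 has an endpoint that is bad and has that edge as its only edge
  have hD : ∀ K K' : ↥𝒦, 𝒢.Adj K K' →
      ((K : Set V) ∈ ℬ ∧ 𝒢.neighborSet K = {K'}) ∨
      ((K' : Set V) ∈ ℬ ∧ 𝒢.neighborSet K' = {K}) := by
    have key : ∀ K K' : ↥𝒦, K ≠ K' →
        (∃ e ∈ C, ∃ u v : V, e = s(u, v) ∧ u ∈ (K : Set V) ∧ v ∈ (K' : Set V)) →
        ((K : Set V) ∈ ℬ ∧ 𝒢.neighborSet K = {K'}) ∨
        ((K' : Set V) ∈ ℬ ∧ 𝒢.neighborSet K' = {K}) := by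
      rintro K K' hKK' ⟨e, he, u, v, heq, hu, hv⟩
      obtain ⟨B, hBbad, ⟨w, hwB, hwe⟩, huniq⟩ := hpriv e he
      rw [heq, Sym2.mem_iff] at hwe
      rcases hwe with h | h
      · have hwK : w ∈ (K : Set V) := by rw [h]; exact hu
        have hBK' : (⟨B, hBK hBbad⟩ : ↥𝒦) = K := hmem _ K w hwB hwK
        have hBeq : B = (K : Set V) := congrArg Subtype.val hBK'
        subst hBeq
        exact Or.inl ⟨hBbad, core e he u v K K' heq hu hv hKK' huniq⟩
      · have hwK : w ∈ (K' : Set V) := by rw [h]; exact hv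
        have hBK' : (⟨B, hBK hBbad⟩ : ↥𝒦) = K' := hmem _ K' w hwB hwK
        have hBeq : B = (K' : Set V) := congrArg Subtype.val hBK'
        subst hBeq
        exact Or.inr ⟨hBbad, core e he v u K' K (heq.trans Sym2.eq_swap) hv hu
          (Ne.symm hKK') huniq⟩
    intro K K' hadj
    rw [h𝒢, SimpleGraph.fromRel_adj] at hadj
    obtain ⟨hKK', h | h⟩ := hadj
    · exact key K K' hKK' h
    · exact (key K' K (Ne.symm hKK') h).symm
  -- closure lemma for connected components
  have hwalk : ∀ (S : Set ↥𝒦), (∀ a ∈ S, ∀ b, 𝒢.Adj a b → b ∈ S) →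
      ∀ (a b : ↥𝒦), 𝒢.Walk a b → a ∈ S → b ∈ S := by
    intro S hcl a b p
    induction p with
    | nil => exact id
    | cons h _ ih => intro ha; exact ih (hcl _ ha _ h)
  -- the star-shape statement, for components represented by a vertex
  have hstar : ∀ v : ↥𝒦, ∃ K₀ ∈ (𝒢.connectedComponentMk v).supp,
      ∀ K ∈ (𝒢.connectedComponentMk v).supp, K ≠ K₀ → 𝒢.neighborSet K = {K₀} := by
    intro v
    have hreachmem : ∀ K, K ∈ (𝒢.connectedComponentMk v).supp → 𝒢.Reachable v K := by
      intro K hK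
      exact (SimpleGraph.ConnectedComponent.exact hK).symm
    by_cases hv : ∃ w, 𝒢.Adj v w
    · obtain ⟨w, hvw⟩ := hv
      obtain ⟨x, y, hxyadj, hNx, hvor⟩ :
          ∃ x y : ↥𝒦, 𝒢.Adj x y ∧ 𝒢.neighborSet x = {y} ∧ (x = v ∨ y = v) := by
        rcases hD v w hvw with ⟨_, h⟩ | ⟨_, h⟩
        · exact ⟨v, w, hvw, h, Or.inl rfl⟩
        · exact ⟨w, v, hvw.symm, h, Or.inr rfl⟩
      have hvy : 𝒢.Reachable v y := by
        rcases hvor with rfl | rfl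
        · exact hxyadj.reachable
        · exact SimpleGraph.Reachable.refl _
      have hymem : y ∈ (𝒢.connectedComponentMk v).supp := by
        rw [SimpleGraph.ConnectedComponent.mem_supp_iff]
        exact SimpleGraph.ConnectedComponent.sound hvy.symm
      by_cases hy : ∀ z, 𝒢.Adj y z → z = x
      · refine ⟨y, hymem, ?_⟩
        intro K hK hKy
        have hcl : ∀ a ∈ ({x, y} : Set ↥𝒦), ∀ b, 𝒢.Adj a b → b ∈ ({x, y} : Set ↥𝒦) := by
          rintro a (rfl | rfl) b hab
          · have : b ∈ 𝒢.neighborSet a := hab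
            rw [hNx] at this
            exact Or.inr this
          · exact Or.inl (hy b hab)
        have hvS : v ∈ ({x, y} : Set ↥𝒦) := by
          rcases hvor with rfl | rfl
          · exact Or.inl rfl
          · exact Or.inr rfl
        have hKS : K ∈ ({x, y} : Set ↥𝒦) := by
          obtain ⟨p⟩ := hreachmem K hK
          exact hwalk _ hcl v K p hvS
        rcases hKS with rfl | rfl
        · exact hNx
        · exact absurd rfl hKy
      · push_neg at hy
        obtain ⟨z, hyz, hzx⟩ := hy
        have hleaf : ∀ u, 𝒢.Adj y u → 𝒢.neighborSet u = {y} := by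
          intro u hyu
          rcases hD y u hyu with ⟨_, hNy⟩ | ⟨_, h⟩
          · exfalso
            have hx : x ∈ 𝒢.neighborSet y := hxyadj.symm
            have hz : z ∈ 𝒢.neighborSet y := hyz
            rw [hNy] at hx hz
            exact hzx (hz.trans hx.symm)
          · exact h
        refine ⟨y, hymem, ?_⟩
        intro K hK hKy
        set S : Set ↥𝒦 := insert y (𝒢.neighborSet y) with hS
        have hcl : ∀ a ∈ S, ∀ b, 𝒢.Adj a b → b ∈ S := by
          rintro a (rfl | ha) b hab
          · exact Or.inr hab
          · have : b ∈ 𝒢.neighborSet a := hab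
            rw [hleaf a ha] at this
            exact Or.inl this
        have hvS : v ∈ S := by
          rcases hvor with rfl | rfl
          · exact Or.inr hxyadj.symm
          · exact Or.inl rfl
        have hKS : K ∈ S := by
          obtain ⟨p⟩ := hreachmem K hK
          exact hwalk _ hcl v K p hvS
        rcases hKS with rfl | hKN
        · exact absurd rfl hKy
        · exact hleaf K hKN
    · push_neg at hv
      refine ⟨v, by rw [SimpleGraph.ConnectedComponent.mem_supp_iff], ?_⟩
      intro K hK hKv
      exfalso
      have hcl : ∀ a ∈ ({v} : Set ↥𝒦), ∀ b, 𝒢.Adj a b → b ∈ ({v} : Set ↥𝒦) := by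
        rintro a rfl b hab
        exact absurd hab (hv b)
      obtain ⟨p⟩ := hreachmem K hK
      exact hKv (hwalk _ hcl v K p rfl)
  intro c
  refine SimpleGraph.ConnectedComponent.ind (fun v => ?_) c
  refine ⟨hstar v, ?_, ?_⟩
  · -- single-edge components have a bad endpoint
    intro K₁ K₂ hne12 hsupp
    have h1 : K₁ ∈ (𝒢.connectedComponentMk v).supp := by rw [hsupp]; exact Or.inl rfl
    have h2 : K₂ ∈ (𝒢.connectedComponentMk v).supp := by rw [hsupp]; exact Or.inr rfl
    have h1' : 𝒢.connectedComponentMk K₁ = 𝒢.connectedComponentMk v :=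
      (SimpleGraph.ConnectedComponent.mem_supp_iff _ _).mp h1
    have h2' : 𝒢.connectedComponentMk K₂ = 𝒢.connectedComponentMk v :=
      (SimpleGraph.ConnectedComponent.mem_supp_iff _ _).mp h2
    have hreach : 𝒢.Reachable K₁ K₂ :=
      SimpleGraph.ConnectedComponent.exact (h1'.trans h2'.symm)
    have hstep : ∀ a b : ↥𝒦, 𝒢.Walk a b → a ≠ b →
        ∃ x, 𝒢.Adj a x := by
      intro a b p
      induction p with
      | nil => intro h; exact absurd rfl h
      | cons h q _ => intro _; exact ⟨_, h⟩
    obtain ⟨p⟩ := hreach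
    obtain ⟨x, hadj⟩ := hstep K₁ K₂ p hne12
    have hx' : x ∈ ({K₁, K₂} : Set ↥𝒦) := by
      rw [← hsupp]
      show 𝒢.connectedComponentMk x = 𝒢.connectedComponentMk v
      rw [← SimpleGraph.ConnectedComponent.connectedComponentMk_eq_of_adj hadj, h1']
    rcases hx' with rfl | rfl
    · exact absurd rfl hadj.ne'
    · rcases hD K₁ x hadj with ⟨hb1, _⟩ | ⟨hb2, _⟩
      · exact Or.inl hb1
      · exact Or.inr hb2
  · -- star components have all satellites bad
    intro hcard
    obtain ⟨K₀, hK₀, hsat⟩ := hstar v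
    refine ⟨K₀, hK₀, hsat, ?_⟩
    have hfin : (𝒢.connectedComponentMk v).supp.Finite := by
      by_contra h
      rw [Set.Infinite.ncard h] at hcard
      omega
    have hdiffcard : 1 < ((𝒢.connectedComponentMk v).supp \ {K₀}).ncard := by
      have := Set.ncard_diff_singleton_add_one hK₀ hfin
      omega
    obtain ⟨K₁, K₂, hK₁, hK₂, h12⟩ :=
      (Set.one_lt_ncard_iff hfin.diff).mp hdiffcard
    have hadj1 : 𝒢.Adj K₁ K₀ := by
      have := hsat K₁ hK₁.1 hK₁.2
      have : K₀ ∈ 𝒢.neighborSet K₁ := by rw [this]; rfl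
      exact this
    have hadj2 : 𝒢.Adj K₂ K₀ := by
      have := hsat K₂ hK₂.1 hK₂.2
      have : K₀ ∈ 𝒢.neighborSet K₂ := by rw [this]; rfl
      exact this
    intro K hK hKK₀
    have hadj : 𝒢.Adj K K₀ := by
      have := hsat K hK hKK₀
      have : K₀ ∈ 𝒢.neighborSet K := by rw [this]; rfl
      exact this
    rcases hD K K₀ hadj with ⟨hbad, _⟩ | ⟨_, hN₀⟩
    · exact hbad
    · exfalso
      have h1 : K₁ ∈ 𝒢.neighborSet K₀ := hadj1.symm
      have h2 : K₂ ∈ 𝒢.neighborSet K₀ := hadj2.symm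
      rw [hN₀] at h1 h2
      exact h12 (h1.trans h2.symm)
end

section
/- Let G be a finite simple graph, M a maximum matching of G, and H a subgraph of G with M ⊆ E(H) such that every connected component of H is either a single edge belonging to M, or a path p1–p2–p3–p4–p5 on 5 vertices whose end edges {p1,p2} and {p4,p5} belong to M and whose other edges do not belong to M. Suppose that H admits no augmenting triple. Let I denote the set of all internal non-middle vertices (i.e. the second and fourth vertices) of the 5-path components of H. Then for every edge component e = {v,w} of H and every vertex u ∈ V(G) \ V(H) with {u,v} ∈ E(G): every neighbor of u in G lies in {v, w} ∪ I, and every neighbor of w in G lies in {v, u} ∪ I. -/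
open SimpleGraph

/-- The connected component of `v` in the subgraph `H`, as a set of vertices. -/
def Hcomp {V : Type*} {G : SimpleGraph V} (H : G.Subgraph) (v : V) : Set V :=
  {u | Relation.ReflTransGen H.Adj v u}

/-- The connected component of `a` in `H` is the single edge `{a, b}`. -/
def IsEdgeComp {V : Type*} {G : SimpleGraph V} (H : G.Subgraph) (a b : V) : Prop :=
  H.Adj a b ∧ Hcomp H a = {a, b}

/-- The connected component of `p 0` in `H` is the 5-path `p 0 – p 1 – p 2 – p 3 – p 4`,
whose end edges belong to `M` and whose other edges do not. -/
def Is5PathComp {V : Type*} [DecidableEq V] {G : SimpleGraph V} (H : G.Subgraph)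
    (M : Finset (Sym2 V)) (p : Fin 5 → V) : Prop :=
  Function.Injective p ∧
  (∀ i : Fin 4, H.Adj (p i.castSucc) (p i.succ)) ∧
  Hcomp H (p 0) = Set.range p ∧
  (∀ u v : V, u ∈ Set.range p → v ∈ Set.range p → H.Adj u v →
    ∃ i : Fin 4, (u = p i.castSucc ∧ v = p i.succ) ∨ (u = p i.succ ∧ v = p i.castSucc)) ∧
  s(p 0, p 1) ∈ M ∧ s(p 3, p 4) ∈ M ∧ s(p 1, p 2) ∉ M ∧ s(p 2, p 3) ∉ M

/-- `H` admits an augmenting triple. -/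
def HasAugTriple {V : Type*} [DecidableEq V] (G : SimpleGraph V) (H : G.Subgraph) :
    Prop :=
  ∃ u0 v0 w0 v1 w1 : V, u0 ∉ H.verts ∧ IsEdgeComp H v0 w0 ∧ IsEdgeComp H v1 w1 ∧
    s(v0, w0) ≠ s(v1, w1) ∧
    ((G.Adj u0 v0 ∧ G.Adj u0 v1) ∨ (G.Adj u0 v0 ∧ G.Adj w0 v1))
section Helpers
variable {V : Type*} {G : SimpleGraph V} {H : G.Subgraph} {M : Finset (Sym2 V)}

lemma hcomp_eq {a b : V} (h : Relation.ReflTransGen H.Adj a b) :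
    Hcomp H a = Hcomp H b := by
  have hs : Symmetric H.Adj := fun _ _ h => h.symm
  ext x
  exact ⟨fun hx => ((@Relation.ReflTransGen.symmetric _ _ ⟨fun _ _ h' => hs h'⟩).symm _ _ h).trans hx, fun hx => h.trans hx⟩

lemma mem_hcomp_adj {a b c : V} (hb : b ∈ Hcomp H a) (h : H.Adj b c) : c ∈ Hcomp H a :=
  Relation.ReflTransGen.tail hb h

lemma M_edge_struct (hMH : ↑M ⊆ H.edgeSet) {f : Sym2 V} (hf : f ∈ M) {x : V}
    (hx : x ∈ f) : ∃ z, f = s(x, z) ∧ H.Adj x z := by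
  have hfe : f ∈ H.edgeSet := hMH hf
  induction f with
  | _ a b =>
    rw [SimpleGraph.Subgraph.mem_edgeSet] at hfe
    rcases Sym2.mem_iff.1 hx with rfl | rfl
    · exact ⟨b, rfl, hfe⟩
    · exact ⟨a, Sym2.eq_swap, hfe.symm⟩

lemma not_verts_unsat (hMH : ↑M ⊆ H.edgeSet) {x : V} (hx : x ∉ H.verts) :
    ∀ f ∈ M, x ∉ f := by
  intro f hf hxf
  obtain ⟨z, _, hadj⟩ := M_edge_struct hMH hf hxf
  exact hx hadj.fst_mem

lemma isEdgeComp_symm {a b : V} (h : IsEdgeComp H a b) : IsEdgeComp H b a := by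
  refine ⟨h.1.symm, ?_⟩
  rw [← hcomp_eq (Relation.ReflTransGen.single h.1), h.2, Set.pair_comm]

lemma edgeComp_only {a b : V} (h : IsEdgeComp H a b) (hMH : ↑M ⊆ H.edgeSet)
    {f : Sym2 V} (hf : f ∈ M) (hx : a ∈ f) : f = s(a, b) := by
  obtain ⟨z, rfl, hadj⟩ := M_edge_struct hMH hf hx
  have hz : z ∈ Hcomp H a := Relation.ReflTransGen.single hadj
  rw [h.2] at hz
  rcases hz with rfl | rfl
  · exact absurd rfl hadj.ne
  · rfl

end Helpers
section Helpers2
variable {V : Type*} [DecidableEq V] {G : SimpleGraph V} {H : G.Subgraph} {M : Finset (Sym2 V)}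

lemma path_range_hcomp {p : Fin 5 → V} (hp : Is5PathComp H M p) (j : Fin 5) :
    Hcomp H (p j) = Set.range p := by
  have h0 : p j ∈ Hcomp H (p 0) := by rw [hp.2.2.1]; exact ⟨j, rfl⟩
  rw [← hcomp_eq h0, hp.2.2.1]

lemma path_M_edge {p : Fin 5 → V} (hp : Is5PathComp H M p) (hMH : ↑M ⊆ H.edgeSet)
    {f : Sym2 V} (hf : f ∈ M) {j : Fin 5} (hx : p j ∈ f) :
    (f = s(p 0, p 1) ∧ (j = 0 ∨ j = 1)) ∨ (f = s(p 3, p 4) ∧ (j = 3 ∨ j = 4)) := by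
  obtain ⟨z, rfl, hadj⟩ := M_edge_struct hMH hf hx
  have hz : z ∈ Set.range p := by
    rw [← path_range_hcomp hp j]; exact Relation.ReflTransGen.single hadj
  obtain ⟨i, hi⟩ := hp.2.2.2.1 (p j) z ⟨j, rfl⟩ hz hadj
  have hinj := hp.1
  fin_cases i <;> rcases hi with ⟨h1, h2⟩ | ⟨h1, h2⟩ <;>
    simp only [Fin.succ, Fin.castSucc, Fin.castAdd, Fin.castLE, Fin.isValue] at h1 h2
  · exact Or.inl ⟨by rw [h1, h2]; rfl, Or.inl (hinj h1)⟩
  · exact Or.inl ⟨by rw [h1, h2]; exact Sym2.eq_swap, Or.inr (hinj h1)⟩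
  · rw [h1, h2] at hf; exact absurd hf hp.2.2.2.2.2.2.1
  · rw [h1, h2] at hf; rw [Sym2.eq_swap] at hf; exact absurd hf hp.2.2.2.2.2.2.1
  · rw [h1, h2] at hf; exact absurd hf hp.2.2.2.2.2.2.2
  · rw [h1, h2] at hf; rw [Sym2.eq_swap] at hf; exact absurd hf hp.2.2.2.2.2.2.2
  · exact Or.inr ⟨by rw [h1, h2]; rfl, Or.inl (hinj h1)⟩
  · exact Or.inr ⟨by rw [h1, h2]; exact Sym2.eq_swap, Or.inr (hinj h1)⟩

lemma path_p2_unsat {p : Fin 5 → V} (hp : Is5PathComp H M p) (hMH : ↑M ⊆ H.edgeSet) :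
    ∀ f ∈ M, p 2 ∉ f := by
  intro f hf hx
  rcases path_M_edge hp hMH hf hx with ⟨_, h | h⟩ | ⟨_, h | h⟩ <;> exact absurd h (by decide)

lemma path_p0_only {p : Fin 5 → V} (hp : Is5PathComp H M p) (hMH : ↑M ⊆ H.edgeSet)
    {f : Sym2 V} (hf : f ∈ M) (hx : p 0 ∈ f) : f = s(p 0, p 1) := by
  rcases path_M_edge hp hMH hf hx with ⟨h, _⟩ | ⟨_, h | h⟩
  · exact h
  · exact absurd h (by decide)
  · exact absurd h (by decide)

lemma path_p1_only {p : Fin 5 → V} (hp : Is5PathComp H M p) (hMH : ↑M ⊆ H.edgeSet)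
    {f : Sym2 V} (hf : f ∈ M) (hx : p 1 ∈ f) : f = s(p 0, p 1) := by
  rcases path_M_edge hp hMH hf hx with ⟨h, _⟩ | ⟨_, h | h⟩
  · exact h
  · exact absurd h (by decide)
  · exact absurd h (by decide)

lemma path_p3_only {p : Fin 5 → V} (hp : Is5PathComp H M p) (hMH : ↑M ⊆ H.edgeSet)
    {f : Sym2 V} (hf : f ∈ M) (hx : p 3 ∈ f) : f = s(p 3, p 4) := by
  rcases path_M_edge hp hMH hf hx with ⟨_, h | h⟩ | ⟨h, _⟩
  · exact absurd h (by decide)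
  · exact absurd h (by decide)
  · exact h

lemma path_p4_only {p : Fin 5 → V} (hp : Is5PathComp H M p) (hMH : ↑M ⊆ H.edgeSet)
    {f : Sym2 V} (hf : f ∈ M) (hx : p 4 ∈ f) : f = s(p 3, p 4) := by
  rcases path_M_edge hp hMH hf hx with ⟨_, h | h⟩ | ⟨h, _⟩
  · exact absurd h (by decide)
  · exact absurd h (by decide)
  · exact h

lemma edgeComp_not_in_path {a b : V} (hab : IsEdgeComp H a b) {p : Fin 5 → V}
    (hp : Is5PathComp H M p) : a ∉ Set.range p := by
  rintro ⟨j, rfl⟩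
  have h1 : Set.range p = ({p j, b} : Set V) := by
    rw [← path_range_hcomp hp j, hab.2]
  have e0 : p 0 ∈ ({p j, b} : Set V) := h1 ▸ ⟨0, rfl⟩
  have e1 : p 1 ∈ ({p j, b} : Set V) := h1 ▸ ⟨1, rfl⟩
  have e2 : p 2 ∈ ({p j, b} : Set V) := h1 ▸ ⟨2, rfl⟩
  have hinj := hp.1
  simp only [Set.mem_insert_iff, Set.mem_singleton_iff] at e0 e1 e2
  rcases e0 with h0 | h0 <;> rcases e1 with h1' | h1' <;> rcases e2 with h2 | h2
  · exact absurd (hinj (h0.trans h1'.symm)) (by decide)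
  · exact absurd (hinj (h0.trans h1'.symm)) (by decide)
  · exact absurd (hinj (h0.trans h2.symm)) (by decide)
  · exact absurd (hinj (h1'.trans h2.symm)) (by decide)
  · exact absurd (hinj (h1'.trans h2.symm)) (by decide)
  · exact absurd (hinj (h0.trans h2.symm)) (by decide)
  · exact absurd (hinj (h0.trans h1'.symm)) (by decide)
  · exact absurd (hinj (h0.trans h1'.symm)) (by decide)

end Helpers2
section Helpers3
variable {V : Type*} [DecidableEq V] {G : SimpleGraph V} {H : G.Subgraph} {M : Finset (Sym2 V)}

lemma isEdgeComp_mem_M (hMH : ↑M ⊆ H.edgeSet)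
    (hcomps : ∀ x ∈ H.verts,
      (∃ a b : V, (x = a ∨ x = b) ∧ IsEdgeComp H a b ∧ s(a, b) ∈ M) ∨
      (∃ p : Fin 5 → V, x ∈ Set.range p ∧ Is5PathComp H M p))
    {v w : V} (hvw : IsEdgeComp H v w) : s(v, w) ∈ M := by
  have hvH : v ∈ H.verts := hvw.1.fst_mem
  rcases hcomps v hvH with ⟨a, b, hv, hab, habM⟩ | ⟨p, hvp, hp⟩
  · rcases hv with rfl | rfl
    · -- v = a
      have : Hcomp H v = {v, b} := hab.2
      have hw : w ∈ ({v, b} : Set V) := by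
        rw [← this, hvw.2]; exact Or.inr rfl
      rcases hw with rfl | rfl
      · exact absurd rfl hvw.1.ne
      · exact habM
    · -- v = b
      have hca : Hcomp H v = {a, v} := by
        rw [← hcomp_eq (Relation.ReflTransGen.single hab.1)]; exact hab.2
      have hw : w ∈ ({a, v} : Set V) := by
        rw [← hca, hvw.2]; exact Or.inr rfl
      rcases hw with rfl | rfl
      · rw [Sym2.eq_swap]; exact habM
      · exact absurd rfl hvw.1.ne
  · exact absurd hvp (edgeComp_not_in_path hvw hp)

lemma augment [DecidableEq (Sym2 V)] (hM : IsMaxMatchingSet G M) (D A : Finset (Sym2 V))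
    (hD : D ⊆ M) (hA : ↑A ⊆ G.edgeSet)
    (hAA : ∀ e ∈ A, ∀ f ∈ A, e ≠ f → ∀ x : V, x ∈ e → x ∉ f)
    (hAM : ∀ e ∈ A, ∀ f ∈ M, f ∉ D → ∀ x : V, x ∈ e → x ∉ f)
    (hcard : D.card < A.card) : False := by
  set M' : Finset (Sym2 V) := (M \ D) ∪ A with hM'
  have hAnd : ∀ e ∈ A, e ∉ M \ D := by
    intro e he hmd
    rw [Finset.mem_sdiff] at hmd
    obtain ⟨x, y⟩ := e
    have hxy : G.Adj x y := hA he
    exact hAM _ he _ hmd.1 hmd.2 x (Sym2.mem_mk_left x y) (Sym2.mem_mk_left x y)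
  have hdisj : Disjoint (M \ D) A := by
    rw [Finset.disjoint_right]; intro e he; exact hAnd e he
  have hmatch : IsMatchingSet G M' := by
    constructor
    · intro e he
      rw [hM', Finset.coe_union, Set.mem_union] at he
      rcases he with he | he
      · exact hM.1.1 (Finset.mem_coe.2 (Finset.mem_sdiff.1 (Finset.mem_coe.1 he)).1)
      · exact hA he
    · intro e he f hf hef x hxe
      rw [hM', Finset.mem_union, Finset.mem_sdiff] at he hf
      rcases he with ⟨heM, heD⟩ | heA <;> rcases hf with ⟨hfM, hfD⟩ | hfA
      · exact hM.1.2 e heM f hfM hef x hxe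
      · intro hxf; exact hAM f hfA e heM heD x hxf hxe
      · exact hAM e heA f hfM hfD x hxe
      · exact hAA e heA f hfA hef x hxe
  have hcard' : M.card < M'.card := by
    rw [hM', Finset.card_union_of_disjoint hdisj, Finset.card_sdiff_of_subset hD]
    have := Finset.card_le_card hD
    omega
  exact absurd (hM.2 M' hmatch) (Nat.not_le.2 hcard')

end Helpers3
section Helpers4
variable {V : Type*} [DecidableEq V] {G : SimpleGraph V} {M : Finset (Sym2 V)}

lemma aug1 (hM : IsMaxMatchingSet G M) {x1 x2 : V} (h12 : G.Adj x1 x2)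
    (honly : ∀ f ∈ M, x1 ∉ f ∧ x2 ∉ f) : False := by
  classical
  refine augment hM ∅ {s(x1, x2)} (Finset.empty_subset _) ?_ ?_ ?_ (by simp)
  · intro e he
    simp only [Finset.coe_singleton, Set.mem_singleton_iff] at he
    subst he; exact h12
  · intro e he f hf hef x hxe hxf
    simp only [Finset.mem_singleton] at he hf
    exact hef (he.trans hf.symm)
  · intro e he f hf _ x hxe hxf
    simp only [Finset.mem_singleton] at he
    subst he
    rcases Sym2.mem_iff.1 hxe with rfl | rfl
    · exact (honly f hf).1 hxf
    · exact (honly f hf).2 hxf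

lemma aug2 (hM : IsMaxMatchingSet G M) {x1 x2 x3 x4 : V} (e0 : Sym2 V) (he0 : e0 ∈ M)
    (h12 : G.Adj x1 x2) (h34 : G.Adj x3 x4)
    (d13 : x1 ≠ x3) (d14 : x1 ≠ x4) (d23 : x2 ≠ x3) (d24 : x2 ≠ x4)
    (honly : ∀ f ∈ M, f ≠ e0 → x1 ∉ f ∧ x2 ∉ f ∧ x3 ∉ f ∧ x4 ∉ f) : False := by
  classical
  have hne : s(x1, x2) ≠ s(x3, x4) := by
    intro h; rw [Sym2.eq_iff] at h
    rcases h with ⟨rfl, rfl⟩ | ⟨rfl, rfl⟩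
    · exact d13 rfl
    · exact d14 rfl
  refine augment hM {e0} {s(x1, x2), s(x3, x4)} (by simpa using he0) ?_ ?_ ?_ ?_
  · intro e he
    simp only [Finset.coe_insert, Finset.coe_singleton, Set.mem_insert_iff,
      Set.mem_singleton_iff] at he
    rcases he with rfl | rfl
    · exact h12
    · exact h34
  · intro e he f hf hef x hxe hxf
    simp only [Finset.mem_insert, Finset.mem_singleton] at he hf
    rcases he with rfl | rfl <;> rcases hf with rfl | rfl
    · exact hef rfl
    · rcases Sym2.mem_iff.1 hxe with rfl | rfl <;> rcases Sym2.mem_iff.1 hxf with h | h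
      · exact d13 h
      · exact d14 h
      · exact d23 h
      · exact d24 h
    · rcases Sym2.mem_iff.1 hxe with rfl | rfl <;> rcases Sym2.mem_iff.1 hxf with h | h
      · exact d13 h.symm
      · exact d23 h.symm
      · exact d14 h.symm
      · exact d24 h.symm
    · exact hef rfl
  · intro e he f hf hfD x hxe
    simp only [Finset.mem_singleton] at hfD
    obtain ⟨h1, h2, h3, h4⟩ := honly f hf hfD
    simp only [Finset.mem_insert, Finset.mem_singleton] at he
    rcases he with rfl | rfl <;> rcases Sym2.mem_iff.1 hxe with rfl | rfl <;> assumption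
  · rw [Finset.card_singleton, Finset.card_insert_of_notMem (by simpa using hne),
      Finset.card_singleton]
    omega

lemma aug3 (hM : IsMaxMatchingSet G M) {x1 x2 x3 x4 x5 x6 : V} (e0 e1 : Sym2 V)
    (he0 : e0 ∈ M) (he1 : e1 ∈ M) (he01 : e0 ≠ e1)
    (h12 : G.Adj x1 x2) (h34 : G.Adj x3 x4) (h56 : G.Adj x5 x6)
    (d13 : x1 ≠ x3) (d14 : x1 ≠ x4) (d23 : x2 ≠ x3) (d24 : x2 ≠ x4)
    (d15 : x1 ≠ x5) (d16 : x1 ≠ x6) (d25 : x2 ≠ x5) (d26 : x2 ≠ x6)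
    (d35 : x3 ≠ x5) (d36 : x3 ≠ x6) (d45 : x4 ≠ x5) (d46 : x4 ≠ x6)
    (honly : ∀ f ∈ M, f ≠ e0 → f ≠ e1 →
      x1 ∉ f ∧ x2 ∉ f ∧ x3 ∉ f ∧ x4 ∉ f ∧ x5 ∉ f ∧ x6 ∉ f) : False := by
  classical
  have hne12 : s(x1, x2) ≠ s(x3, x4) := by
    intro h; rw [Sym2.eq_iff] at h; rcases h with ⟨rfl, rfl⟩ | ⟨rfl, rfl⟩; exacts [d13 rfl, d14 rfl]
  have hne13 : s(x1, x2) ≠ s(x5, x6) := by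
    intro h; rw [Sym2.eq_iff] at h; rcases h with ⟨rfl, rfl⟩ | ⟨rfl, rfl⟩; exacts [d15 rfl, d16 rfl]
  have hne23 : s(x3, x4) ≠ s(x5, x6) := by
    intro h; rw [Sym2.eq_iff] at h; rcases h with ⟨rfl, rfl⟩ | ⟨rfl, rfl⟩; exacts [d35 rfl, d36 rfl]
  refine augment hM {e0, e1} {s(x1, x2), s(x3, x4), s(x5, x6)}
    (by rw [Finset.insert_subset_iff]; exact ⟨he0, Finset.singleton_subset_iff.2 he1⟩)
    ?_ ?_ ?_ ?_
  · intro e he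
    simp only [Finset.coe_insert, Finset.coe_singleton, Set.mem_insert_iff,
      Set.mem_singleton_iff] at he
    rcases he with rfl | rfl | rfl
    exacts [h12, h34, h56]
  · intro e he f hf hef x hxe hxf
    simp only [Finset.mem_insert, Finset.mem_singleton] at he hf
    rcases he with rfl | rfl | rfl <;> rcases hf with rfl | rfl | rfl <;>
      try exact hef rfl
    all_goals rcases Sym2.mem_iff.1 hxe with rfl | rfl <;>
      rcases Sym2.mem_iff.1 hxf with h | h
    exacts [d13 h, d14 h, d23 h, d24 h,
      d15 h, d16 h, d25 h, d26 h,
      d13 h.symm, d23 h.symm, d14 h.symm, d24 h.symm,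
      d35 h, d36 h, d45 h, d46 h,
      d15 h.symm, d25 h.symm, d16 h.symm, d26 h.symm,
      d35 h.symm, d45 h.symm, d36 h.symm, d46 h.symm]
  · intro e he f hf hfD x hxe
    simp only [Finset.mem_insert, Finset.mem_singleton, not_or] at hfD
    obtain ⟨h1, h2, h3, h4, h5, h6⟩ := honly f hf hfD.1 hfD.2
    simp only [Finset.mem_insert, Finset.mem_singleton] at he
    rcases he with rfl | rfl | rfl <;> rcases Sym2.mem_iff.1 hxe with rfl | rfl <;>
      assumption
  · have c1 : ({e0, e1} : Finset (Sym2 V)).card = 2 := by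
      rw [Finset.card_insert_of_notMem (by simpa using he01), Finset.card_singleton]
    have c2 : ({s(x1, x2), s(x3, x4), s(x5, x6)} : Finset (Sym2 V)).card = 3 := by
      rw [Finset.card_insert_of_notMem (by simp [hne12, hne13]),
        Finset.card_insert_of_notMem (by simpa using hne23), Finset.card_singleton]
    omega

end Helpers4
section Main
variable {V : Type*} [DecidableEq V] {G : SimpleGraph V} {H : G.Subgraph} {M : Finset (Sym2 V)}

lemma path_mem_verts {p : Fin 5 → V} (hp : Is5PathComp H M p) (j : Fin 5) :
    p j ∈ H.verts := by
  fin_cases j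
  · exact (hp.2.1 0).fst_mem
  · exact (hp.2.1 0).snd_mem
  · exact (hp.2.1 1).snd_mem
  · exact (hp.2.1 2).snd_mem
  · exact (hp.2.1 3).snd_mem

end Main

/-- if every component of `H` is an `M`-edge or a 5-path with end edges in
`M`, and `H` has no augmenting triple, then for every edge component `{v, w}` of `H` and
every `u ∉ V(H)` with `{u,v} ∈ E(G)`, all neighbors of `u` lie in `{v, w} ∪ I` and all
neighbors of `w` lie in `{v, u} ∪ I`, where `I` is the set of internal non-middle
vertices of the 5-path components of `H`. -/
theorem stmt6 {V : Type*} [Fintype V] [DecidableEq V] (G : SimpleGraph V)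
    (M : Finset (Sym2 V)) (hM : IsMaxMatchingSet G M)
    (H : G.Subgraph) (hMH : ↑M ⊆ H.edgeSet)
    (hcomps : ∀ x ∈ H.verts,
      (∃ a b : V, (x = a ∨ x = b) ∧ IsEdgeComp H a b ∧ s(a, b) ∈ M) ∨
      (∃ p : Fin 5 → V, x ∈ Set.range p ∧ Is5PathComp H M p))
    (hnoaug : ¬ HasAugTriple G H)
    (I : Set V)
    (hI : I = {x | ∃ p : Fin 5 → V, Is5PathComp H M p ∧ (x = p 1 ∨ x = p 3)})
    (v w u : V) (hvw : IsEdgeComp H v w) (hu : u ∉ H.verts) (huv : G.Adj u v) :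
    (∀ y : V, G.Adj u y → y ∈ ({v, w} : Set V) ∪ I) ∧
    (∀ y : V, G.Adj w y → y ∈ ({v, u} : Set V) ∪ I) := by
  have hvadj : H.Adj v w := hvw.1
  have hvH : v ∈ H.verts := hvadj.fst_mem
  have hwH : w ∈ H.verts := hvadj.snd_mem
  have hvwM : s(v, w) ∈ M := isEdgeComp_mem_M hMH hcomps hvw
  have hu_unsat : ∀ f ∈ M, u ∉ f := not_verts_unsat hMH hu
  have hv_only : ∀ f ∈ M, v ∈ f → f = s(v, w) := fun f hf hx => edgeComp_only hvw hMH hf hx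
  have hw_only : ∀ f ∈ M, w ∈ f → f = s(v, w) := fun f hf hx => by
    rw [edgeComp_only (isEdgeComp_symm hvw) hMH hf hx]; exact Sym2.eq_swap
  have huvne : u ≠ v := fun h => hu (h ▸ hvH)
  have huwne : u ≠ w := fun h => hu (h ▸ hwH)
  have hvwne : v ≠ w := hvadj.ne
  constructor
  · intro y huy
    by_contra hy
    simp only [Set.mem_union, Set.mem_insert_iff, Set.mem_singleton_iff, not_or] at hy
    obtain ⟨⟨hyv, hyw⟩, hyI⟩ := hy
    rw [hI] at hyI
    by_cases hyH : y ∈ H.verts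
    · rcases hcomps y hyH with ⟨a, b, hyab, hab, habM⟩ | ⟨p, hyp, hp⟩
      · apply hnoaug
        rcases hyab with rfl | rfl
        · refine ⟨u, v, w, y, b, hu, hvw, hab, ?_, Or.inl ⟨huv, huy⟩⟩
          intro h; rw [Sym2.eq_iff] at h
          rcases h with ⟨h1, _⟩ | ⟨_, h2⟩
          · exact hyv h1.symm
          · exact hyw h2.symm
        · refine ⟨u, v, w, y, a, hu, hvw, isEdgeComp_symm hab, ?_, Or.inl ⟨huv, huy⟩⟩
          intro h; rw [Sym2.eq_iff] at h
          rcases h with ⟨h1, _⟩ | ⟨_, h2⟩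
          · exact hyv h1.symm
          · exact hyw h2.symm
      · obtain ⟨j, rfl⟩ := hyp
        have hj1 : p j ≠ p 1 := fun h => hyI ⟨p, hp, Or.inl h⟩
        have hj3 : p j ≠ p 3 := fun h => hyI ⟨p, hp, Or.inr h⟩
        have hadj12 : G.Adj (p 1) (p 2) := (hp.2.1 1).adj_sub
        have hadj23 : G.Adj (p 2) (p 3) := (hp.2.1 2).adj_sub
        have hinj := hp.1
        have hup : ∀ k : Fin 5, u ≠ p k := fun k h => hu (h ▸ path_mem_verts hp k)
        fin_cases j
        · exact aug2 hM s(p 0, p 1) hp.2.2.2.2.1 huy hadj12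
            (hup 1) (hup 2) (fun h => absurd (hinj h) (by decide))
            (fun h => absurd (hinj h) (by decide))
            (fun f hf hfne => ⟨hu_unsat f hf,
              fun hx => hfne (path_p0_only hp hMH hf hx),
              fun hx => hfne (path_p1_only hp hMH hf hx),
              path_p2_unsat hp hMH f hf⟩)
        · exact hj1 rfl
        · exact aug1 hM huy (fun f hf => ⟨hu_unsat f hf, path_p2_unsat hp hMH f hf⟩)
        · exact hj3 rfl
        · exact aug2 hM s(p 3, p 4) hp.2.2.2.2.2.1 huy hadj23.symm
            (hup 3) (hup 2) (fun h => absurd (hinj h) (by decide))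
            (fun h => absurd (hinj h) (by decide))
            (fun f hf hfne => ⟨hu_unsat f hf,
              fun hx => hfne (path_p4_only hp hMH hf hx),
              fun hx => hfne (path_p3_only hp hMH hf hx),
              path_p2_unsat hp hMH f hf⟩)
    · exact aug1 hM huy (fun f hf => ⟨hu_unsat f hf, not_verts_unsat hMH hyH f hf⟩)
  · intro y hwy
    by_contra hy
    simp only [Set.mem_union, Set.mem_insert_iff, Set.mem_singleton_iff, not_or] at hy
    obtain ⟨⟨hyv, hyu⟩, hyI⟩ := hy
    rw [hI] at hyI
    have hywne : w ≠ y := hwy.ne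
    by_cases hyH : y ∈ H.verts
    · rcases hcomps y hyH with ⟨a, b, hyab, hab, habM⟩ | ⟨p, hyp, hp⟩
      · apply hnoaug
        rcases hyab with rfl | rfl
        · refine ⟨u, v, w, y, b, hu, hvw, hab, ?_, Or.inr ⟨huv, hwy⟩⟩
          intro h; rw [Sym2.eq_iff] at h
          rcases h with ⟨h1, _⟩ | ⟨_, h2⟩
          · exact hyv h1.symm
          · exact hywne h2
        · refine ⟨u, v, w, y, a, hu, hvw, isEdgeComp_symm hab, ?_, Or.inr ⟨huv, hwy⟩⟩
          intro h; rw [Sym2.eq_iff] at h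
          rcases h with ⟨h1, _⟩ | ⟨_, h2⟩
          · exact hyv h1.symm
          · exact hywne h2
      · obtain ⟨j, rfl⟩ := hyp
        have hj1 : p j ≠ p 1 := fun h => hyI ⟨p, hp, Or.inl h⟩
        have hj3 : p j ≠ p 3 := fun h => hyI ⟨p, hp, Or.inr h⟩
        have hadj12 : G.Adj (p 1) (p 2) := (hp.2.1 1).adj_sub
        have hadj23 : G.Adj (p 2) (p 3) := (hp.2.1 2).adj_sub
        have hinj := hp.1
        have hup : ∀ k : Fin 5, u ≠ p k := fun k h => hu (h ▸ path_mem_verts hp k)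
        have hvnp : v ∉ Set.range p := edgeComp_not_in_path hvw hp
        have hwnp : w ∉ Set.range p := edgeComp_not_in_path (isEdgeComp_symm hvw) hp
        have hvp : ∀ k : Fin 5, v ≠ p k := fun k h => hvnp ⟨k, h.symm⟩
        have hwp : ∀ k : Fin 5, w ≠ p k := fun k h => hwnp ⟨k, h.symm⟩
        have hne0 : s(v, w) ≠ s(p 0, p 1) := by
          intro h; rw [Sym2.eq_iff] at h
          rcases h with ⟨h1, _⟩ | ⟨h1, _⟩
          · exact hvp 0 h1
          · exact hvp 1 h1
        have hne1 : s(v, w) ≠ s(p 3, p 4) := by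
          intro h; rw [Sym2.eq_iff] at h
          rcases h with ⟨h1, _⟩ | ⟨h1, _⟩
          · exact hvp 3 h1
          · exact hvp 4 h1
        fin_cases j
        · exact aug3 hM s(v, w) s(p 0, p 1) hvwM hp.2.2.2.2.1 hne0 huv hwy hadj12
            huwne (hup 0) hvwne (hvp 0) (hup 1) (hup 2) (hvp 1) (hvp 2)
            (hwp 1) (hwp 2) (fun h => absurd (hinj h) (by decide))
            (fun h => absurd (hinj h) (by decide))
            (fun f hf h0 h1 => ⟨hu_unsat f hf,
              fun hx => h0 (hv_only f hf hx),
              fun hx => h0 (hw_only f hf hx),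
              fun hx => h1 (path_p0_only hp hMH hf hx),
              fun hx => h1 (path_p1_only hp hMH hf hx),
              path_p2_unsat hp hMH f hf⟩)
        · exact hj1 rfl
        · exact aug2 hM s(v, w) hvwM huv hwy huwne (hup 2) hvwne (hvp 2)
            (fun f hf hfne => ⟨hu_unsat f hf,
              fun hx => hfne (hv_only f hf hx),
              fun hx => hfne (hw_only f hf hx),
              path_p2_unsat hp hMH f hf⟩)
        · exact hj3 rfl
        · exact aug3 hM s(v, w) s(p 3, p 4) hvwM hp.2.2.2.2.2.1 hne1 huv hwy hadj23.symm
            huwne (hup 4) hvwne (hvp 4) (hup 3) (hup 2) (hvp 3) (hvp 2)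
            (hwp 3) (hwp 2) (fun h => absurd (hinj h) (by decide))
            (fun h => absurd (hinj h) (by decide))
            (fun f hf h0 h1 => ⟨hu_unsat f hf,
              fun hx => h0 (hv_only f hf hx),
              fun hx => h0 (hw_only f hf hx),
              fun hx => h1 (path_p4_only hp hMH hf hx),
              fun hx => h1 (path_p3_only hp hMH hf hx),
              path_p2_unsat hp hMH f hf⟩)
    · exact aug2 hM s(v, w) hvwM huv hwy huwne (fun h => hyu h.symm) hvwne
        (fun h => hyv h.symm)
        (fun f hf hfne => ⟨hu_unsat f hf,
          fun hx => hfne (hv_only f hf hx),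
          fun hx => hfne (hw_only f hf hx),
          not_verts_unsat hMH hyH f hf⟩)
end

section
/- Consider a 5-path-center configuration in a finite simple graph G with A1 ∪ A2 = {1,2,3,4,5}. Then G contains a collection of vertex-disjoint paths, each of order at least 4, covering at least 13 vertices in total; and if moreover A2 ∩ {1,3,5} ≠ ∅, then G contains such a collection covering at least 17 vertices in total. -/
open SimpleGraph

section Helpers

variable {V : Type*} [Fintype V] [DecidableEq V] {G : SimpleGraph V}

lemma nbr_empty (H : G.Subgraph) {v : V} (hv : v ∉ H.verts) :
    H.neighborSet v = ∅ := by
  ext w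
  simp only [Subgraph.mem_neighborSet, Set.mem_empty_iff_false, iff_false]
  exact fun h => hv (H.edge_vert h)

/-- Structure facts for a path subgraph of order ≥ 2. -/
lemma path_struct {P : G.Subgraph} (hP : IsPathSubgraph P) (h2 : 2 ≤ P.verts.ncard) :
    ({v ∈ P.verts | subDeg P v = 1}).ncard = 2 ∧
      ∀ v ∈ P.verts, subDeg P v = 1 ∨ subDeg P v = 2 := by
  rcases hP.2 with ⟨v, hv⟩ | h
  · rw [hv, Set.ncard_singleton] at h2; omega
  · exact h

/-- Gluing two path subgraphs at adjacent endpoints. -/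
lemma glue_path {P Q : G.Subgraph} {p q : V}
    (hP : IsPathSubgraph P) (hQ : IsPathSubgraph Q)
    (hp : IsPathEndpoint P p) (hq : IsPathEndpoint Q q)
    (hP2 : 2 ≤ P.verts.ncard) (hQ2 : 2 ≤ Q.verts.ncard)
    (hdisj : Disjoint P.verts Q.verts) (hadj : G.Adj p q) :
    IsPathSubgraph (P ⊔ G.subgraphOfAdj hadj ⊔ Q) ∧
      (P ⊔ G.subgraphOfAdj hadj ⊔ Q).verts = P.verts ∪ Q.verts := by
  set e := G.subgraphOfAdj hadj with he
  obtain ⟨hSP, hdegP⟩ := path_struct hP hP2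
  obtain ⟨hSQ, hdegQ⟩ := path_struct hQ hQ2
  have hpq : p ≠ q := hadj.ne
  have hpP : p ∈ P.verts := hp.1
  have hqQ : q ∈ Q.verts := hq.1
  have hverts : (P ⊔ e ⊔ Q).verts = P.verts ∪ Q.verts := by
    simp only [Subgraph.verts_sup, he, subgraphOfAdj_verts]
    ext x
    constructor
    · rintro ((hx | hx) | hx)
      · exact Or.inl hx
      · rcases hx with rfl | hx
        · exact Or.inl hpP
        · rw [Set.mem_singleton_iff] at hx; subst hx; exact Or.inr hqQ
      · exact Or.inr hx
    · rintro (hx | hx)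
      · exact Or.inl (Or.inl hx)
      · exact Or.inr hx
  -- degree computations
  have hdegPside : ∀ z ∈ P.verts, z ≠ p → subDeg (P ⊔ e ⊔ Q) z = subDeg P z := by
    intro z hz hzp
    have hzq : z ≠ q := by rintro rfl; exact (hdisj.le_bot ⟨hz, hqQ⟩)
    unfold subDeg
    rw [Subgraph.neighborSet_sup, Subgraph.neighborSet_sup,
      nbr_empty Q (Set.disjoint_left.mp hdisj hz),
      he, neighborSet_subgraphOfAdj_of_ne_of_ne hadj hzp hzq,
      Set.union_empty, Set.union_empty]
  have hdegQside : ∀ z ∈ Q.verts, z ≠ q → subDeg (P ⊔ e ⊔ Q) z = subDeg Q z := by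
    intro z hz hzq
    have hzp : z ≠ p := by rintro rfl; exact (hdisj.le_bot ⟨hpP, hz⟩)
    unfold subDeg
    rw [Subgraph.neighborSet_sup, Subgraph.neighborSet_sup,
      nbr_empty P (Set.disjoint_right.mp hdisj hz),
      he, neighborSet_subgraphOfAdj_of_ne_of_ne hadj hzp hzq,
      Set.empty_union, Set.empty_union]
  have hdegp : subDeg (P ⊔ e ⊔ Q) p = 2 := by
    unfold subDeg
    rw [Subgraph.neighborSet_sup, Subgraph.neighborSet_sup,
      nbr_empty Q (Set.disjoint_left.mp hdisj hpP),
      he, neighborSet_fst_subgraphOfAdj hadj, Set.union_empty]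
    rw [Set.ncard_union_eq (by
        simp only [Set.disjoint_singleton_right]
        exact fun h => hdisj.le_bot ⟨P.neighborSet_subset_verts p h, hqQ⟩)
      (Set.toFinite _) (Set.toFinite _), Set.ncard_singleton]
    have := hp.2; unfold subDeg at this; omega
  have hdegq : subDeg (P ⊔ e ⊔ Q) q = 2 := by
    unfold subDeg
    rw [Subgraph.neighborSet_sup, Subgraph.neighborSet_sup,
      nbr_empty P (Set.disjoint_right.mp hdisj hqQ),
      he, neighborSet_snd_subgraphOfAdj hadj, Set.empty_union]
    rw [Set.ncard_union_eq (by
        simp only [Set.disjoint_left, Set.mem_singleton_iff]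
        rintro x rfl h
        exact hdisj.le_bot ⟨hpP, Q.neighborSet_subset_verts q h⟩)
      (Set.toFinite _) (Set.toFinite _), Set.ncard_singleton]
    have := hq.2; unfold subDeg at this; omega
  constructor
  · constructor
    · -- connectedness
      have h1 : (P ⊔ e).Connected := by
        refine Subgraph.connected_sup hP.1.preconnected (Subgraph.subgraphOfAdj_connected hadj).preconnected ⟨p, hpP, ?_⟩
        simp [he]
      refine Subgraph.connected_sup h1.preconnected hQ.1.preconnected ⟨q, ?_, hqQ⟩
      simp [he, Subgraph.verts_sup]
    · right
      constructor
      · -- endpoint count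
        have hset : {z ∈ (P ⊔ e ⊔ Q).verts | subDeg (P ⊔ e ⊔ Q) z = 1} =
            ({z ∈ P.verts | subDeg P z = 1} \ {p}) ∪
            ({z ∈ Q.verts | subDeg Q z = 1} \ {q}) := by
          ext z
          simp only [Set.mem_setOf_eq, Set.mem_union, Set.mem_diff,
            Set.mem_singleton_iff, Set.mem_sep_iff, hverts]
          constructor
          · rintro ⟨hz | hz, hdz⟩
            · have hzp : z ≠ p := by rintro rfl; rw [hdegp] at hdz; omega
              rw [hdegPside z hz hzp] at hdz
              exact Or.inl ⟨⟨hz, hdz⟩, hzp⟩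
            · have hzq : z ≠ q := by rintro rfl; rw [hdegq] at hdz; omega
              rw [hdegQside z hz hzq] at hdz
              exact Or.inr ⟨⟨hz, hdz⟩, hzq⟩
          · rintro (⟨⟨hz, hdz⟩, hzp⟩ | ⟨⟨hz, hdz⟩, hzq⟩)
            · exact ⟨Or.inl hz, by rw [hdegPside z hz hzp]; exact hdz⟩
            · exact ⟨Or.inr hz, by rw [hdegQside z hz hzq]; exact hdz⟩
        rw [hset, Set.ncard_union_eq (by
            exact Set.disjoint_of_subset (fun x hx => hx.1.1) (fun x hx => hx.1.1) hdisj)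
          (Set.toFinite _) (Set.toFinite _)]
        have h1 : ({z ∈ P.verts | subDeg P z = 1} \ {p}).ncard = 1 := by
          rw [Set.ncard_sdiff_singleton_of_mem (s := {z ∈ P.verts | subDeg P z = 1}) (Set.mem_sep hpP hp.2), hSP]
        have h2 : ({z ∈ Q.verts | subDeg Q z = 1} \ {q}).ncard = 1 := by
          rw [Set.ncard_sdiff_singleton_of_mem (s := {z ∈ Q.verts | subDeg Q z = 1}) (Set.mem_sep hqQ hq.2), hSQ]
        omega
      · -- degree dichotomy
        intro z hz
        rw [hverts] at hz
        rcases hz with hz | hz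
        · by_cases hzp : z = p
          · subst hzp; right; exact hdegp
          · rw [hdegPside z hz hzp]; exact hdegP z hz
        · by_cases hzq : z = q
          · subst hzq; right; exact hdegq
          · rw [hdegQside z hz hzq]; exact hdegQ z hz
  · exact hverts

/-- Extending a path subgraph by one new vertex at an endpoint. -/
lemma extend_path {P : G.Subgraph} {p w : V}
    (hP : IsPathSubgraph P) (hp : IsPathEndpoint P p) (hP2 : 2 ≤ P.verts.ncard)
    (hw : w ∉ P.verts) (hadj : G.Adj p w) :
    IsPathSubgraph (P ⊔ G.subgraphOfAdj hadj) ∧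
      (P ⊔ G.subgraphOfAdj hadj).verts = insert w P.verts ∧
      IsPathEndpoint (P ⊔ G.subgraphOfAdj hadj) w := by
  set e := G.subgraphOfAdj hadj with he
  obtain ⟨hSP, hdegP⟩ := path_struct hP hP2
  have hpP : p ∈ P.verts := hp.1
  have hpw : p ≠ w := hadj.ne
  have hverts : (P ⊔ e).verts = insert w P.verts := by
    simp only [Subgraph.verts_sup, he, subgraphOfAdj_verts]
    ext x
    simp only [Set.mem_union, Set.mem_insert_iff, Set.mem_singleton_iff]
    constructor
    · rintro (hx | rfl | rfl)
      · exact Or.inr hx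
      · exact Or.inr hpP
      · exact Or.inl rfl
    · rintro (rfl | hx)
      · exact Or.inr (Or.inr rfl)
      · exact Or.inl hx
  have hdegPside : ∀ z ∈ P.verts, z ≠ p → subDeg (P ⊔ e) z = subDeg P z := by
    intro z hz hzp
    have hzw : z ≠ w := by rintro rfl; exact hw hz
    unfold subDeg
    rw [Subgraph.neighborSet_sup, he,
      neighborSet_subgraphOfAdj_of_ne_of_ne hadj hzp hzw, Set.union_empty]
  have hdegw : subDeg (P ⊔ e) w = 1 := by
    unfold subDeg
    rw [Subgraph.neighborSet_sup, nbr_empty P hw, he,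
      neighborSet_snd_subgraphOfAdj hadj, Set.empty_union, Set.ncard_singleton]
  have hdegp : subDeg (P ⊔ e) p = 2 := by
    unfold subDeg
    rw [Subgraph.neighborSet_sup, he, neighborSet_fst_subgraphOfAdj hadj]
    rw [Set.ncard_union_eq (by
        simp only [Set.disjoint_singleton_right]
        exact fun h => hw (P.neighborSet_subset_verts p h))
      (Set.toFinite _) (Set.toFinite _), Set.ncard_singleton]
    have := hp.2; unfold subDeg at this; omega
  have hwmem : w ∈ (P ⊔ e).verts := by rw [hverts]; exact Set.mem_insert _ _
  refine ⟨⟨?_, Or.inr ⟨?_, ?_⟩⟩, hverts, hwmem, hdegw⟩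
  · refine Subgraph.connected_sup hP.1.preconnected (Subgraph.subgraphOfAdj_connected hadj).preconnected ⟨p, hpP, ?_⟩
    simp [he]
  · have hset : {z ∈ (P ⊔ e).verts | subDeg (P ⊔ e) z = 1} =
        insert w ({z ∈ P.verts | subDeg P z = 1} \ {p}) := by
      ext z
      simp only [Set.mem_setOf_eq, Set.mem_insert_iff, Set.mem_diff,
        Set.mem_singleton_iff, Set.mem_sep_iff, hverts]
      constructor
      · rintro ⟨rfl | hz, hdz⟩
        · exact Or.inl rfl
        · have hzp : z ≠ p := by rintro rfl; rw [hdegp] at hdz; omega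
          rw [hdegPside z hz hzp] at hdz
          exact Or.inr ⟨⟨hz, hdz⟩, hzp⟩
      · rintro (rfl | ⟨⟨hz, hdz⟩, hzp⟩)
        · exact ⟨Or.inl rfl, hdegw⟩
        · exact ⟨Or.inr hz, by rw [hdegPside z hz hzp]; exact hdz⟩
    rw [hset, Set.ncard_insert_of_notMem (fun h => hw h.1.1) (Set.toFinite _),
      Set.ncard_sdiff_singleton_of_mem (s := {z ∈ P.verts | subDeg P z = 1}) (Set.mem_sep hpP hp.2), hSP]
  · intro z hz
    rw [hverts] at hz
    rcases hz with rfl | hz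
    · left; exact hdegw
    · by_cases hzp : z = p
      · subst hzp; right; exact hdegp
      · rw [hdegPside z hz hzp]; exact hdegP z hz

end Helpers


section Cover

variable {V : Type*} [Fintype V] [DecidableEq V]

lemma cover_two (G : SimpleGraph V) {R1 R2 : G.Subgraph}
    (h1 : IsPathSubgraph R1) (h2 : IsPathSubgraph R2)
    (hc1 : 4 ≤ R1.verts.ncard) (hc2 : 4 ≤ R2.verts.ncard)
    (d12 : Disjoint R1.verts R2.verts) {N : ℕ}
    (hN : N ≤ R1.verts.ncard + R2.verts.ncard) :
    HasDisjointPathCover G N := by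
  refine ⟨{R1, R2}, ?_, ?_, ?_⟩
  · rintro P (rfl | rfl)
    · exact ⟨h1, hc1⟩
    · exact ⟨h2, hc2⟩
  · rintro x (rfl | rfl) y (rfl | rfl) hxy
    · exact absurd rfl hxy
    · exact d12
    · exact d12.symm
    · exact absurd rfl hxy
  · have hu : (⋃ P ∈ ({R1, R2} : Set G.Subgraph), P.verts) = R1.verts ∪ R2.verts := by
      simp
    rw [hu, Set.ncard_union_eq d12 (Set.toFinite _) (Set.toFinite _)]
    exact hN

lemma cover_three (G : SimpleGraph V) {R1 R2 R3 : G.Subgraph}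
    (h1 : IsPathSubgraph R1) (h2 : IsPathSubgraph R2) (h3 : IsPathSubgraph R3)
    (hc1 : 4 ≤ R1.verts.ncard) (hc2 : 4 ≤ R2.verts.ncard) (hc3 : 4 ≤ R3.verts.ncard)
    (d12 : Disjoint R1.verts R2.verts) (d13 : Disjoint R1.verts R3.verts)
    (d23 : Disjoint R2.verts R3.verts) {N : ℕ}
    (hN : N ≤ R1.verts.ncard + R2.verts.ncard + R3.verts.ncard) :
    HasDisjointPathCover G N := by
  refine ⟨{R1, R2, R3}, ?_, ?_, ?_⟩
  · rintro P (rfl | rfl | rfl)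
    · exact ⟨h1, hc1⟩
    · exact ⟨h2, hc2⟩
    · exact ⟨h3, hc3⟩
  · rintro x (rfl | rfl | rfl) y (rfl | rfl | rfl) hxy
    · exact absurd rfl hxy
    · exact d12
    · exact d13
    · exact d12.symm
    · exact absurd rfl hxy
    · exact d23
    · exact d13.symm
    · exact d23.symm
    · exact absurd rfl hxy
  · have hu : (⋃ P ∈ ({R1, R2, R3} : Set G.Subgraph), P.verts) =
        R1.verts ∪ (R2.verts ∪ R3.verts) := by
      simp [Set.union_assoc]
    rw [hu, Set.ncard_union_eq (Set.disjoint_union_right.mpr ⟨d12, d13⟩)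
      (Set.toFinite _) (Set.toFinite _),
      Set.ncard_union_eq d23 (Set.toFinite _) (Set.toFinite _)]
    omega

end Cover


/-- A 5-path-center configuration in `G`: a path `v 0 – v 1 – v 2 – v 3 – v 4` in `G`
(indices `0,…,4` correspond to `v1,…,v5`), disjoint index sets `A1` (1-anchors) and
`A2` (2-anchors), pairwise disjoint sets `U i` avoiding the `v i`'s, for each
`i ∈ A1 ∪ A2` a path `Q i` of order at least 3 with endpoint `v i` and all other
vertices in `U i`, and for each `i ∈ A2` additionally a path `P i` of order at least 5
with `v i ∈ V(P i) ⊆ {v i} ∪ U i`. -/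
structure FivePathConfig {V : Type*} (G : SimpleGraph V) where
  v : Fin 5 → V
  inj : Function.Injective v
  adj : ∀ i : Fin 4, G.Adj (v i.castSucc) (v i.succ)
  A1 : Finset (Fin 5)
  A2 : Finset (Fin 5)
  hA : Disjoint A1 A2
  U : Fin 5 → Set V
  hUv : ∀ i ∈ A1 ∪ A2, Disjoint (U i) (Set.range v)
  hUdisj : ∀ i ∈ A1 ∪ A2, ∀ j ∈ A1 ∪ A2, i ≠ j → Disjoint (U i) (U j)
  Q : Fin 5 → G.Subgraph
  hQpath : ∀ i ∈ A1 ∪ A2, IsPathSubgraph (Q i)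
  hQcard : ∀ i ∈ A1 ∪ A2, 3 ≤ (Q i).verts.ncard
  hQend : ∀ i ∈ A1 ∪ A2, IsPathEndpoint (Q i) (v i)
  hQverts : ∀ i ∈ A1 ∪ A2, (Q i).verts ⊆ insert (v i) (U i)
  P : Fin 5 → G.Subgraph
  hPpath : ∀ i ∈ A2, IsPathSubgraph (P i)
  hPcard : ∀ i ∈ A2, 5 ≤ (P i).verts.ncard
  hPv : ∀ i ∈ A2, v i ∈ (P i).verts
  hPverts : ∀ i ∈ A2, (P i).verts ⊆ insert (v i) (U i)

/-- a 5-path-center configuration with `A1 ∪ A2 = {1,…,5}` yields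
vertex-disjoint `4⁺`-paths covering at least 13 vertices, and at least 17 if some
`2`-anchor is among `v1, v3, v5` (indices `0, 2, 4`). -/
theorem stmt7 {V : Type*} [Fintype V] [DecidableEq V] (G : SimpleGraph V)
    (cfg : FivePathConfig G) (hall : cfg.A1 ∪ cfg.A2 = Finset.univ) :
    HasDisjointPathCover G 13 ∧
    ((cfg.A2 ∩ ({0, 2, 4} : Finset (Fin 5))).Nonempty → HasDisjointPathCover G 17) := by
  have hall' : ∀ i : Fin 5, i ∈ cfg.A1 ∪ cfg.A2 := fun i => by
    rw [hall]; exact Finset.mem_univ i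
  have hQp : ∀ i, IsPathSubgraph (cfg.Q i) := fun i => cfg.hQpath i (hall' i)
  have hQc : ∀ i, 3 ≤ (cfg.Q i).verts.ncard := fun i => cfg.hQcard i (hall' i)
  have hQe : ∀ i, IsPathEndpoint (cfg.Q i) (cfg.v i) := fun i => cfg.hQend i (hall' i)
  have hQv : ∀ i, (cfg.Q i).verts ⊆ insert (cfg.v i) (cfg.U i) :=
    fun i => cfg.hQverts i (hall' i)
  have key : ∀ i j : Fin 5, i ≠ j → ∀ S T : Set V,
      S ⊆ insert (cfg.v i) (cfg.U i) → T ⊆ insert (cfg.v j) (cfg.U j) → Disjoint S T := by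
    intro i j hij S T hS hT
    rw [Set.disjoint_left]
    intro x hxS hxT
    rcases Set.mem_insert_iff.mp (hS hxS) with rfl | hxi
    · rcases Set.mem_insert_iff.mp (hT hxT) with h | hxj
      · exact hij (cfg.inj h)
      · exact Set.disjoint_left.mp (cfg.hUv j (hall' j)) hxj ⟨i, rfl⟩
    · rcases Set.mem_insert_iff.mp (hT hxT) with h | hxj
      · exact Set.disjoint_left.mp (cfg.hUv i (hall' i)) hxi ⟨j, h.symm⟩
      · exact Set.disjoint_left.mp
          (cfg.hUdisj i (hall' i) j (hall' j) hij) hxi hxj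
  have keyQQ : ∀ i j : Fin 5, i ≠ j → Disjoint (cfg.Q i).verts (cfg.Q j).verts :=
    fun i j hij => key i j hij _ _ (hQv i) (hQv j)
  have hvQ : ∀ i j : Fin 5, i ≠ j → cfg.v j ∉ (cfg.Q i).verts :=
    fun i j hij h => (keyQQ i j hij).le_bot ⟨h, (hQe j).1⟩
  have a01 : G.Adj (cfg.v 0) (cfg.v 1) := by
    have h := cfg.adj 0
    rwa [show ((0 : Fin 4).castSucc) = (0 : Fin 5) by decide,
      show ((0 : Fin 4).succ) = (1 : Fin 5) by decide] at h
  have a12 : G.Adj (cfg.v 1) (cfg.v 2) := by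
    have h := cfg.adj 1
    rwa [show ((1 : Fin 4).castSucc) = (1 : Fin 5) by decide,
      show ((1 : Fin 4).succ) = (2 : Fin 5) by decide] at h
  have a23 : G.Adj (cfg.v 2) (cfg.v 3) := by
    have h := cfg.adj 2
    rwa [show ((2 : Fin 4).castSucc) = (2 : Fin 5) by decide,
      show ((2 : Fin 4).succ) = (3 : Fin 5) by decide] at h
  have a34 : G.Adj (cfg.v 3) (cfg.v 4) := by
    have h := cfg.adj 3
    rwa [show ((3 : Fin 4).castSucc) = (3 : Fin 5) by decide,
      show ((3 : Fin 4).succ) = (4 : Fin 5) by decide] at h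
  -- the glued path on Q3, v3-v4, Q4
  obtain ⟨hRBp, hRBv⟩ := glue_path (hQp 3) (hQp 4) (hQe 3) (hQe 4)
    (by have := hQc 3; omega) (by have := hQc 4; omega) (keyQQ 3 4 (by decide)) a34
  have hRBc : 6 ≤ (cfg.Q 3 ⊔ G.subgraphOfAdj a34 ⊔ cfg.Q 4).verts.ncard := by
    rw [hRBv, Set.ncard_union_eq (keyQQ 3 4 (by decide)) (Set.toFinite _) (Set.toFinite _)]
    have := hQc 3; have := hQc 4; omega
  -- glued path on Q0, v0-v1, Q1
  obtain ⟨hR01p, hR01v⟩ := glue_path (hQp 0) (hQp 1) (hQe 0) (hQe 1)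
    (by have := hQc 0; omega) (by have := hQc 1; omega) (keyQQ 0 1 (by decide)) a01
  have hR01c : 6 ≤ (cfg.Q 0 ⊔ G.subgraphOfAdj a01 ⊔ cfg.Q 1).verts.ncard := by
    rw [hR01v, Set.ncard_union_eq (keyQQ 0 1 (by decide)) (Set.toFinite _) (Set.toFinite _)]
    have := hQc 0; have := hQc 1; omega
  constructor
  · -- part 1 : cover of 13
    have a21 : G.Adj (cfg.v 2) (cfg.v 1) := a12.symm
    obtain ⟨hR2p, hR2v, hR2e⟩ := extend_path (hQp 2) (hQe 2)
      (by have := hQc 2; omega) (hvQ 2 1 (by decide)) a21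
    have hR2c : 4 ≤ (cfg.Q 2 ⊔ G.subgraphOfAdj a21).verts.ncard := by
      rw [hR2v, Set.ncard_insert_of_notMem (hvQ 2 1 (by decide)) (Set.toFinite _)]
      have := hQc 2; omega
    have hdisjA : Disjoint (cfg.Q 0).verts (cfg.Q 2 ⊔ G.subgraphOfAdj a21).verts := by
      rw [hR2v]
      rw [Set.insert_eq]
      exact Set.disjoint_union_right.mpr
        ⟨Set.disjoint_singleton_right.mpr (hvQ 0 1 (by decide)), keyQQ 0 2 (by decide)⟩
    obtain ⟨hRAp, hRAv⟩ := glue_path (hQp 0) hR2p (hQe 0) hR2e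
      (by have := hQc 0; omega) (by omega) hdisjA a01
    have hRAc : 7 ≤ (cfg.Q 0 ⊔ G.subgraphOfAdj a01 ⊔ (cfg.Q 2 ⊔ G.subgraphOfAdj a21)).verts.ncard := by
      rw [hRAv, Set.ncard_union_eq hdisjA (Set.toFinite _) (Set.toFinite _)]
      have := hQc 0; omega
    have hdAB : Disjoint (cfg.Q 0 ⊔ G.subgraphOfAdj a01 ⊔ (cfg.Q 2 ⊔ G.subgraphOfAdj a21)).verts
        (cfg.Q 3 ⊔ G.subgraphOfAdj a34 ⊔ cfg.Q 4).verts := by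
      rw [hRAv, hRBv, hR2v]
      refine Set.disjoint_union_left.mpr ⟨Set.disjoint_union_right.mpr
        ⟨keyQQ 0 3 (by decide), keyQQ 0 4 (by decide)⟩,
        Set.disjoint_union_right.mpr ⟨?_, ?_⟩⟩
      · rw [Set.insert_eq]
        exact Set.disjoint_union_left.mpr
          ⟨Set.disjoint_singleton_left.mpr (hvQ 3 1 (by decide)), keyQQ 2 3 (by decide)⟩
      · rw [Set.insert_eq]
        exact Set.disjoint_union_left.mpr
          ⟨Set.disjoint_singleton_left.mpr (hvQ 4 1 (by decide)), keyQQ 2 4 (by decide)⟩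
    exact cover_two G hRAp hRBp (by omega) (by omega) hdAB (by omega)
  · -- part 2 : cover of 17
    rintro ⟨i, hi⟩
    rw [Finset.mem_inter] at hi
    obtain ⟨hiA2, hi045⟩ := hi
    have hPp : IsPathSubgraph (cfg.P i) := cfg.hPpath i hiA2
    have hPc : 5 ≤ (cfg.P i).verts.ncard := cfg.hPcard i hiA2
    have hPvs : (cfg.P i).verts ⊆ insert (cfg.v i) (cfg.U i) := cfg.hPverts i hiA2
    have keyPQ : ∀ j : Fin 5, i ≠ j → Disjoint (cfg.P i).verts (cfg.Q j).verts :=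
      fun j hij => key i j hij _ _ hPvs (hQv j)
    simp only [Finset.mem_insert, Finset.mem_singleton] at hi045
    rcases hi045 with rfl | rfl | rfl
    · -- i = 0 : use P 0, Q1-v1-v2-Q2, Q3-v3-v4-Q4
      obtain ⟨hRCp, hRCv⟩ := glue_path (hQp 1) (hQp 2) (hQe 1) (hQe 2)
        (by have := hQc 1; omega) (by have := hQc 2; omega) (keyQQ 1 2 (by decide)) a12
      have hRCc : 6 ≤ (cfg.Q 1 ⊔ G.subgraphOfAdj a12 ⊔ cfg.Q 2).verts.ncard := by
        rw [hRCv, Set.ncard_union_eq (keyQQ 1 2 (by decide)) (Set.toFinite _) (Set.toFinite _)]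
        have := hQc 1; have := hQc 2; omega
      refine cover_three G hPp hRCp hRBp (by omega) (by omega) (by omega) ?_ ?_ ?_ (by omega)
      · rw [hRCv]
        exact Set.disjoint_union_right.mpr ⟨keyPQ 1 (by decide), keyPQ 2 (by decide)⟩
      · rw [hRBv]
        exact Set.disjoint_union_right.mpr ⟨keyPQ 3 (by decide), keyPQ 4 (by decide)⟩
      · rw [hRCv, hRBv]
        refine Set.disjoint_union_left.mpr ⟨Set.disjoint_union_right.mpr
          ⟨keyQQ 1 3 (by decide), keyQQ 1 4 (by decide)⟩,
          Set.disjoint_union_right.mpr ⟨keyQQ 2 3 (by decide), keyQQ 2 4 (by decide)⟩⟩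
    · -- i = 2 : use P 2, Q0-v0-v1-Q1, Q3-v3-v4-Q4
      refine cover_three G hPp hR01p hRBp (by omega) (by omega) (by omega) ?_ ?_ ?_ (by omega)
      · rw [hR01v]
        exact Set.disjoint_union_right.mpr ⟨keyPQ 0 (by decide), keyPQ 1 (by decide)⟩
      · rw [hRBv]
        exact Set.disjoint_union_right.mpr ⟨keyPQ 3 (by decide), keyPQ 4 (by decide)⟩
      · rw [hR01v, hRBv]
        refine Set.disjoint_union_left.mpr ⟨Set.disjoint_union_right.mpr
          ⟨keyQQ 0 3 (by decide), keyQQ 0 4 (by decide)⟩,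
          Set.disjoint_union_right.mpr ⟨keyQQ 1 3 (by decide), keyQQ 1 4 (by decide)⟩⟩
    · -- i = 4 : use P 4, Q0-v0-v1-Q1, Q2-v2-v3-Q3
      obtain ⟨hRDp, hRDv⟩ := glue_path (hQp 2) (hQp 3) (hQe 2) (hQe 3)
        (by have := hQc 2; omega) (by have := hQc 3; omega) (keyQQ 2 3 (by decide)) a23
      have hRDc : 6 ≤ (cfg.Q 2 ⊔ G.subgraphOfAdj a23 ⊔ cfg.Q 3).verts.ncard := by
        rw [hRDv, Set.ncard_union_eq (keyQQ 2 3 (by decide)) (Set.toFinite _) (Set.toFinite _)]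
        have := hQc 2; have := hQc 3; omega
      refine cover_three G hPp hR01p hRDp (by omega) (by omega) (by omega) ?_ ?_ ?_ (by omega)
      · rw [hR01v]
        exact Set.disjoint_union_right.mpr ⟨keyPQ 0 (by decide), keyPQ 1 (by decide)⟩
      · rw [hRDv]
        exact Set.disjoint_union_right.mpr ⟨keyPQ 2 (by decide), keyPQ 3 (by decide)⟩
      · rw [hR01v, hRDv]
        refine Set.disjoint_union_left.mpr ⟨Set.disjoint_union_right.mpr
          ⟨keyQQ 0 2 (by decide), keyQQ 0 3 (by decide)⟩,
          Set.disjoint_union_right.mpr ⟨keyQQ 1 2 (by decide), keyQQ 1 3 (by decide)⟩⟩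
end
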